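/- arXiv:2010.12182 — 2 statements merged into one kernel-verified Lean document; each statement's English description precedes it below -/
import Mathlib

section
/- Let Γ ≤ C₄ × D_{n₂} × D_{n₃} be a 2-injective 3-factor subdirect product with n₂ > 2 and n₃ > 2. Then n₂ = n₃ = 4 and Γ is isomorphic (as a group) to Δ ∩ (rot(D₄) × D₄ × D₄), where Δ is the double CFI group and rot(D₄) is the subgroup of rotations of D₄. -/
/-- `Γ ≤ G₁ × G₂ × G₃` is a (3-factor) subdirect product:
the projection to each factor is surjective on `Γ`. -/
def IsSubdirect3 {G₁ G₂ G₃ : Type*} [Group G₁] [Group G₂] [Group G₃]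
    (Γ : Subgroup (G₁ × G₂ × G₃)) : Prop :=
  (∀ x : G₁, ∃ g ∈ Γ, g.1 = x) ∧ (∀ x : G₂, ∃ g ∈ Γ, g.2.1 = x) ∧
    (∀ x : G₃, ∃ g ∈ Γ, g.2.2 = x)

/-- `Γ ≤ G₁ × G₂ × G₃` is 2-injective: for each `i`, the projection of `Γ` onto
the product of the two factors other than `Gᵢ` is injective on `Γ`. -/
def IsTwoInjective3 {G₁ G₂ G₃ : Type*} [Group G₁] [Group G₂] [Group G₃]
    (Γ : Subgroup (G₁ × G₂ × G₃)) : Prop :=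
  (∀ g ∈ Γ, ∀ h ∈ Γ, g.2.1 = h.2.1 → g.2.2 = h.2.2 → g = h) ∧
  (∀ g ∈ Γ, ∀ h ∈ Γ, g.1 = h.1 → g.2.2 = h.2.2 → g = h) ∧
  (∀ g ∈ Γ, ∀ h ∈ Γ, g.1 = h.1 → g.2.1 = h.2.1 → g = h)

open DihedralGroup in
/-- An element of `Dₙ` is a rotation if it lies in the cyclic subgroup of
rotations `{r i}`; the identity counts as a rotation. -/
def IsRotation {n : ℕ} (x : DihedralGroup n) : Prop := ∃ i, x = r i

open DihedralGroup in
/-- An element of `Dₙ` is a reflection if it is of the form `sr i`. -/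
def IsReflection {n : ℕ} (x : DihedralGroup n) : Prop := ∃ i, x = sr i

/-- A subgroup of a product of three dihedral groups is a rotate-or-reflect group if every
element is either a rotation in all components or a reflection in all components. -/
def IsRotateOrReflect3 {n₁ n₂ n₃ : ℕ}
    (Γ : Subgroup (DihedralGroup n₁ × DihedralGroup n₂ × DihedralGroup n₃)) : Prop :=
  ∀ g ∈ Γ, (IsRotation g.1 ∧ IsRotation g.2.1 ∧ IsRotation g.2.2) ∨
    (IsReflection g.1 ∧ IsReflection g.2.1 ∧ IsReflection g.2.2)

/-- A subgroup of a product of two dihedral groups is a rotate-or-reflect group if every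
element is either a rotation in both components or a reflection in both components. -/
def IsRotateOrReflect2 {n₁ n₂ : ℕ}
    (Γ : Subgroup (DihedralGroup n₁ × DihedralGroup n₂)) : Prop :=
  ∀ g ∈ Γ, (IsRotation g.1 ∧ IsRotation g.2) ∨ (IsReflection g.1 ∧ IsReflection g.2)

open DihedralGroup in
/-- The double CFI group `Δ = ⟨(1,α,α), (α,1,α), (ρ,ρ,β)⟩ ≤ D₄ × D₄ × D₄`, where
`ρ = r 1` is a rotation of order 4, `α = sr 0` and `α' = sr 2` are the two reflections
with `α * α' = ρ²`, and `β = sr 1 ∉ {α, α'}` is a reflection. -/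
def doubleCFI : Subgroup (DihedralGroup 4 × DihedralGroup 4 × DihedralGroup 4) :=
  Subgroup.closure {(1, sr 0, sr 0), (sr 0, 1, sr 0), (r 1, r 1, sr 1)}

open DihedralGroup in
/-- The subgroup `rot(D₄)` of rotations of `D₄`. -/
def rotD4 : Subgroup (DihedralGroup 4) where
  carrier := {x | IsRotation x}
  one_mem' := ⟨0, one_def⟩
  mul_mem' := by
    rintro a b ⟨i, rfl⟩ ⟨j, rfl⟩
    exact ⟨i + j, r_mul_r i j⟩
  inv_mem' := by
    rintro a ⟨i, rfl⟩
    exact ⟨-i, rfl⟩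


set_option maxRecDepth 4000

namespace CFIaux
open DihedralGroup


def L32 : List (DihedralGroup 4 × DihedralGroup 4 × DihedralGroup 4) :=
  [(r 0, r 0, r 0), (r 0, r 2, r 2), (r 0, sr 0, sr 0), (r 0, sr 2, sr 2),
  (r 1, r 1, sr 1), (r 1, r 3, sr 3), (r 1, sr 1, r 1), (r 1, sr 3, r 3),
  (r 2, r 0, r 2), (r 2, r 2, r 0), (r 2, sr 0, sr 2), (r 2, sr 2, sr 0),
  (r 3, r 1, sr 3), (r 3, r 3, sr 1), (r 3, sr 1, r 3), (r 3, sr 3, r 1),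
  (sr 0, r 0, sr 0), (sr 0, r 2, sr 2), (sr 0, sr 0, r 0), (sr 0, sr 2, r 2),
  (sr 1, r 1, r 1), (sr 1, r 3, r 3), (sr 1, sr 1, sr 1), (sr 1, sr 3, sr 3),
  (sr 2, r 0, sr 2), (sr 2, r 2, sr 0), (sr 2, sr 0, r 2), (sr 2, sr 2, r 0),
  (sr 3, r 1, r 3), (sr 3, r 3, r 1), (sr 3, sr 1, sr 3), (sr 3, sr 3, sr 1)]

lemma Lone : (1 : DihedralGroup 4 × DihedralGroup 4 × DihedralGroup 4) ∈ L32 := by decide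

lemma Linv : ∀ a ∈ L32, a⁻¹ ∈ L32 := by decide

lemma Lmul : ∀ a ∈ L32, ∀ b ∈ L32, a * b ∈ L32 := by
  intro a ha
  simp only [L32, List.mem_cons, List.not_mem_nil, or_false] at ha
  rcases ha with rfl|rfl|rfl|rfl|rfl|rfl|rfl|rfl|rfl|rfl|rfl|rfl|rfl|rfl|rfl|rfl|rfl|rfl|rfl|rfl|rfl|rfl|rfl|rfl|rfl|rfl|rfl|rfl|rfl|rfl|rfl|rfl <;> decide

def E : Subgroup (DihedralGroup 4 × DihedralGroup 4 × DihedralGroup 4) where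
  carrier := {x | x ∈ L32}
  one_mem' := Lone
  mul_mem' := fun ha hb => Lmul _ ha _ hb
  inv_mem' := fun ha => Linv _ ha

lemma doubleCFI_le_E : doubleCFI ≤ E := by
  rw [doubleCFI, Subgroup.closure_le]
  intro x hx
  simp only [Set.mem_insert_iff, Set.mem_singleton_iff] at hx
  have hmem : ∀ y, y ∈ L32 → y ∈ (E : Set _) := fun y hy => hy
  rcases hx with rfl | rfl | rfl <;> exact hmem _ (by decide)

def tg : DihedralGroup 4 × DihedralGroup 4 × DihedralGroup 4 := (r 1, r 1, sr 1)
def tk : DihedralGroup 4 × DihedralGroup 4 × DihedralGroup 4 := (1, sr 0, sr 0)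
def tm : DihedralGroup 4 × DihedralGroup 4 × DihedralGroup 4 := (1, r 2, r 2)

lemma tg_mem : tg ∈ doubleCFI := Subgroup.subset_closure (by simp [tg])
lemma tk_mem : tk ∈ doubleCFI := Subgroup.subset_closure (by simp [tk])
lemma tm_mem : tm ∈ doubleCFI := by
  have h : tm = tk * (tg * (tk * tg⁻¹)) := by decide
  rw [h]
  exact mul_mem tk_mem (mul_mem tg_mem (mul_mem tk_mem (inv_mem tg_mem)))

/-- The target group. -/
def T : Subgroup (DihedralGroup 4 × DihedralGroup 4 × DihedralGroup 4) :=
  doubleCFI ⊓ rotD4.prod (⊤ : Subgroup (DihedralGroup 4 × DihedralGroup 4))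

lemma tg_memT : tg ∈ T := ⟨tg_mem, ⟨⟨1, rfl⟩, trivial⟩⟩
lemma tk_memT : tk ∈ T := ⟨tk_mem, ⟨⟨0, one_def⟩, trivial⟩⟩
lemma tm_memT : tm ∈ T := ⟨tm_mem, ⟨⟨0, one_def⟩, trivial⟩⟩

lemma surj_decomp : ∀ x ∈ L32, (∃ i, x.1 = r i) →
    ∃ ε : Fin 2, ∃ δ : Fin 2, ∃ n : Fin 4,
      x = tm ^ (ε : ℕ) * tk ^ (δ : ℕ) * tg ^ (n : ℕ) := by
  intro a ha
  simp only [L32, List.mem_cons, List.not_mem_nil, or_false] at ha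
  rcases ha with rfl|rfl|rfl|rfl|rfl|rfl|rfl|rfl|rfl|rfl|rfl|rfl|rfl|rfl|rfl|rfl|rfl|rfl|rfl|rfl|rfl|rfl|rfl|rfl|rfl|rfl|rfl|rfl|rfl|rfl|rfl|rfl <;> decide

lemma T_decomp : ∀ x ∈ T, ∃ ε : Fin 2, ∃ δ : Fin 2, ∃ n : Fin 4,
    x = tm ^ (ε : ℕ) * tk ^ (δ : ℕ) * tg ^ (n : ℕ) := by
  intro x hx
  exact surj_decomp x (doubleCFI_le_E hx.1) hx.2.1


lemma sr_inv {n : ℕ} (i : ZMod n) : (sr i)⁻¹ = sr i := rfl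
lemma r_inv {n : ℕ} (i : ZMod n) : (r i)⁻¹ = r (-i) := rfl

section Phase1

variable {n₂ n₃ : ℕ} {Γ : Subgroup (Multiplicative (ZMod 4) × DihedralGroup n₂ × DihedralGroup n₃)}

lemma trip_mul (a₁ : Multiplicative (ZMod 4)) (a₂ : DihedralGroup n₂) (a₃ : DihedralGroup n₃)
    (b₁ : Multiplicative (ZMod 4)) (b₂ : DihedralGroup n₂) (b₃ : DihedralGroup n₃) :
    ((a₁, a₂, a₃) * (b₁, b₂, b₃) : Multiplicative (ZMod 4) × DihedralGroup n₂ × DihedralGroup n₃)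
      = (a₁ * b₁, a₂ * b₂, a₃ * b₃) := rfl

lemma trip_inv (a₁ : Multiplicative (ZMod 4)) (a₂ : DihedralGroup n₂) (a₃ : DihedralGroup n₃) :
    ((a₁, a₂, a₃)⁻¹ : Multiplicative (ZMod 4) × DihedralGroup n₂ × DihedralGroup n₃)
      = (a₁⁻¹, a₂⁻¹, a₃⁻¹) := rfl

open commutatorElement in
lemma comm_transfer23 (h2inj : IsTwoInjective3 Γ) {g h} (hg : g ∈ Γ) (hh : h ∈ Γ)
    (hc : g.2.1 * h.2.1 = h.2.1 * g.2.1) : g.2.2 * h.2.2 = h.2.2 * g.2.2 := by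
  have hmem : ⁅g, h⁆ ∈ Γ := by
    rw [commutatorElement_def]
    exact mul_mem (mul_mem (mul_mem hg hh) (inv_mem hg)) (inv_mem hh)
  have e1 : ⁅g, h⁆.1 = (1 : Multiplicative (ZMod 4)) :=
    commutatorElement_eq_one_iff_mul_comm.mpr (mul_comm _ _)
  have e2 : ⁅g, h⁆.2.1 = 1 := commutatorElement_eq_one_iff_mul_comm.mpr hc
  have heq := h2inj.2.2 _ hmem 1 (one_mem Γ) (by rw [e1]; rfl) (by rw [e2]; rfl)
  have e3 : ⁅g, h⁆.2.2 = 1 := by rw [heq]; rfl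
  exact commutatorElement_eq_one_iff_mul_comm.mp e3

open commutatorElement in
lemma comm_transfer32 (h2inj : IsTwoInjective3 Γ) {g h} (hg : g ∈ Γ) (hh : h ∈ Γ)
    (hc : g.2.2 * h.2.2 = h.2.2 * g.2.2) : g.2.1 * h.2.1 = h.2.1 * g.2.1 := by
  have hmem : ⁅g, h⁆ ∈ Γ := by
    rw [commutatorElement_def]
    exact mul_mem (mul_mem (mul_mem hg hh) (inv_mem hg)) (inv_mem hh)
  have e1 : ⁅g, h⁆.1 = (1 : Multiplicative (ZMod 4)) :=
    commutatorElement_eq_one_iff_mul_comm.mpr (mul_comm _ _)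
  have e2 : ⁅g, h⁆.2.2 = 1 := commutatorElement_eq_one_iff_mul_comm.mpr hc
  have heq := h2inj.2.1 _ hmem 1 (one_mem Γ) (by rw [e1]; rfl) (by rw [e2]; rfl)
  have e3 : ⁅g, h⁆.2.1 = 1 := by rw [heq]; rfl
  exact commutatorElement_eq_one_iff_mul_comm.mp e3

lemma not_ss (h2inj : IsTwoInjective3 Γ) {c : Multiplicative (ZMod 4)} {u : ZMod n₂}
    {v : ZMod n₃} (hmem : (c, sr u, sr v) ∈ Γ) (hc : c * c ≠ 1) : False := by
  have h2 : ((c, sr u, sr v) * (c, sr u, sr v) :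
      Multiplicative (ZMod 4) × DihedralGroup n₂ × DihedralGroup n₃) = (c * c, r 0, r 0) := by
    rw [trip_mul, sr_mul_sr, sr_mul_sr, sub_self, sub_self]
  have hm : ((c * c, r 0, r 0) :
      Multiplicative (ZMod 4) × DihedralGroup n₂ × DihedralGroup n₃) ∈ Γ :=
    h2 ▸ mul_mem hmem hmem
  have := h2inj.1 _ hm 1 (one_mem Γ) rfl rfl
  exact hc (congrArg Prod.fst this)

lemma not_rr (h2inj : IsTwoInjective3 Γ) (hsd : IsSubdirect3 Γ) {c : Multiplicative (ZMod 4)}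
    {u : ZMod n₂} {v : ZMod n₃} (hmem : (c, r u, r v) ∈ Γ) (hc : c * c ≠ 1) : False := by
  have chase : ∀ (d : Multiplicative (ZMod 4)) (x : ZMod n₂) (y : ZMod n₃),
      (d, sr x, sr y) ∈ Γ → False := by
    intro d x y hd
    have hconj : ((d, sr x, sr y) * ((c, r u, r v) * (d, sr x, sr y)⁻¹) :
        Multiplicative (ZMod 4) × DihedralGroup n₂ × DihedralGroup n₃)
        = (d * (c * d⁻¹), r (-u), r (-v)) := by
      simp only [trip_inv, sr_inv, trip_mul, r_mul_sr, sr_mul_sr, Prod.mk.injEq, r.injEq]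
      refine ⟨trivial, by ring, by ring⟩
    have hprod : ((c, r u, r v) * ((d, sr x, sr y) * ((c, r u, r v) * (d, sr x, sr y)⁻¹)) :
        Multiplicative (ZMod 4) × DihedralGroup n₂ × DihedralGroup n₃)
        = (c * (d * (c * d⁻¹)), r 0, r 0) := by
      rw [hconj, trip_mul, r_mul_r, r_mul_r]
      refine congrArg (fun z => (c * (d * (c * d⁻¹)), z)) ?_
      rw [Prod.mk.injEq, r.injEq, r.injEq]
      constructor <;> ring
    have hm : ((c * (d * (c * d⁻¹)), r 0, r 0) :
        Multiplicative (ZMod 4) × DihedralGroup n₂ × DihedralGroup n₃) ∈ Γ :=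
      hprod ▸ mul_mem hmem (mul_mem hd (mul_mem hmem (inv_mem hd)))
    have heq := h2inj.1 _ hm 1 (one_mem Γ) rfl rfl
    have h1 : c * (d * (c * d⁻¹)) = 1 := congrArg Prod.fst heq
    have h2 : c * (d * (c * d⁻¹)) = c * c := by
      rw [mul_comm c d⁻¹, mul_inv_cancel_left]
    exact hc (h2 ▸ h1)
  -- now use subdirectness to find reflection elements
  obtain ⟨h₀, hh₀, hh₀2⟩ := hsd.2.1 (sr 0)
  obtain ⟨d₀, x₀, y₀⟩ := h₀
  simp only at hh₀2
  subst hh₀2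
  obtain ⟨k₀, hk₀, hk₀3⟩ := hsd.2.2 (sr 0)
  obtain ⟨d₁, x₁, y₁⟩ := k₀
  simp only at hk₀3
  subst hk₀3
  rcases hy : y₀ with f | f
  · -- y₀ is a rotation; look at x₁
    subst hy
    rcases hx : x₁ with e | e
    · -- both mixed; multiply to get a double reflection
      subst hx
      have hmul : (((d₀, sr 0, r f) * (d₁, r e, sr 0)) :
          Multiplicative (ZMod 4) × DihedralGroup n₂ × DihedralGroup n₃)
          = (d₀ * d₁, sr (0 + e), sr (0 - f)) := by
        rw [trip_mul, sr_mul_r, r_mul_sr]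
      exact chase _ _ _ (hmul ▸ mul_mem hh₀ hk₀)
    · subst hx
      exact chase _ _ _ hk₀
  · subst hy
    exact chase _ _ _ hh₀

lemma n3_eq_four (h2inj : IsTwoInjective3 Γ) (hsd : IsSubdirect3 Γ) (h₃ : 2 < n₃)
    {cA : Multiplicative (ZMod 4)} {p₀ : ZMod n₂} {i₀ : ZMod n₃}
    (hA : (cA, r p₀, sr i₀) ∈ Γ)
    {cB : Multiplicative (ZMod 4)} {e : ZMod n₂} {f : ZMod n₃}
    (hB : (cB, sr e, r f) ∈ Γ) : n₃ = 4 := by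
  have key : ∀ j : ZMod n₃, j + j = 0 ∨ j + j = -(f + f) := by
    intro j
    obtain ⟨k, hk, hk3⟩ := hsd.2.2 (r j)
    obtain ⟨a, x, y⟩ := k
    simp only at hk3
    subst hk3
    rcases hx : x with u | u
    · subst hx
      left
      have hcomm := comm_transfer23 h2inj hk hA
        (by simp only; rw [r_mul_r, r_mul_r, add_comm])
      simp only [r_mul_sr, sr_mul_r] at hcomm
      have := sr.inj hcomm
      linear_combination -this
    · subst hx
      right
      have hmul : (((cB, sr e, r f) * (a, sr u, r j)) :
          Multiplicative (ZMod 4) × DihedralGroup n₂ × DihedralGroup n₃)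
          = (cB * a, r (u - e), r (f + j)) := by
        rw [trip_mul, sr_mul_sr, r_mul_r]
      have hmem := hmul ▸ mul_mem hB hk
      have hcomm := comm_transfer23 h2inj hmem hA
        (by simp only; rw [r_mul_r, r_mul_r, add_comm])
      simp only [r_mul_sr, sr_mul_r] at hcomm
      have := sr.inj hcomm
      linear_combination -this
  have h2ne : (1 + 1 : ZMod n₃) ≠ 0 := by
    intro h0
    have : ((2 : ℕ) : ZMod n₃) = 0 := by rwa [Nat.cast_ofNat, ← one_add_one_eq_two]
    rw [ZMod.natCast_eq_zero_iff] at this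
    exact absurd (Nat.le_of_dvd (by norm_num) this) (by omega)
  have k1 := key 1
  have k2 := key (1 + 1)
  rcases k1 with k1 | k1
  · exact absurd k1 h2ne
  rcases k2 with k2 | k2
  · have h4 : ((4 : ℕ) : ZMod n₃) = 0 := by
      rw [show ((4:ℕ) : ZMod n₃) = (1+1) + (1+1) by push_cast; ring]
      exact k2
    rw [ZMod.natCast_eq_zero_iff] at h4
    have hle := Nat.le_of_dvd (by norm_num) h4
    interval_cases n₃
    · exact absurd h4 (by norm_num)
    · rfl
  · exfalso
    apply h2ne
    rw [← k1] at k2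
    linear_combination k2

end Phase1

section Phase2
open Multiplicative

/-- The dihedral "affine" endomorphism `r i ↦ r (t*i)`, `sr i ↦ sr (t*i+c)`. -/
def dfun (t c : ZMod 4) : DihedralGroup 4 → DihedralGroup 4
  | r i => r (t * i)
  | sr i => sr (t * i + c)

@[simp] lemma dfun_r (t c i : ZMod 4) : dfun t c (r i) = r (t * i) := rfl
@[simp] lemma dfun_sr (t c i : ZMod 4) : dfun t c (sr i) = sr (t * i + c) := rfl

def dmap (t c : ZMod 4) : DihedralGroup 4 →* DihedralGroup 4 where
  toFun := dfun t c
  map_one' := by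
    show dfun t c (r 0) = 1
    rw [dfun_r, mul_zero, one_def]
  map_mul' := by
    rintro (i | i) (j | j) <;>
      simp only [r_mul_r, r_mul_sr, sr_mul_r, sr_mul_sr, dfun_r, dfun_sr, r.injEq,
        sr.injEq] <;> ring

lemma dmap_inj {t : ZMod 4} (c : ZMod 4) (ht : t * t = 1) :
    Function.Injective ⇑(dmap t c) := by
  rintro (i | i) (j | j) h <;>
    simp only [dmap, MonoidHom.coe_mk, OneHom.coe_mk, dfun_r, dfun_sr] at h
  · have h1 : t * i = t * j := r.inj h
    have h2 : t * (t * i) = t * (t * j) := by rw [h1]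
    rw [← mul_assoc, ← mul_assoc, ht, one_mul, one_mul] at h2
    rw [r.injEq]
    exact h2
  · exact absurd h (by simp)
  · exact absurd h (by simp)
  · have h1 : t * i = t * j := by
      have h0 := sr.inj h
      have := congrArg (fun z => z - c) h0
      simpa using this
    have h2 : t * (t * i) = t * (t * j) := by rw [h1]
    rw [← mul_assoc, ← mul_assoc, ht, one_mul, one_mul] at h2
    rw [sr.injEq]
    exact h2

def rmap : Multiplicative (ZMod 4) →* DihedralGroup 4 where
  toFun := fun c => r c.toAdd
  map_one' := rfl
  map_mul' := fun _ _ => (r_mul_r _ _).symm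

lemma rmap_inj : Function.Injective ⇑rmap := by
  intro a b h
  exact r.inj h

end Phase2

section Phase2main
open Multiplicative

abbrev G4 := Multiplicative (ZMod 4) × DihedralGroup 4 × DihedralGroup 4

lemma phase2 (Γ : Subgroup G4) (hsd : IsSubdirect3 Γ) (h2inj : IsTwoInjective3 Γ)
    {p q : ZMod 4} (hg : ((ofAdd (1 : ZMod 4), r p, sr q) : G4) ∈ Γ) :
    Nonempty (Γ ≃* T) := by
  -- Step A : p + p = 2
  have hgg : (((ofAdd (1:ZMod 4), r p, sr q) : G4) * (ofAdd (1:ZMod 4), r p, sr q))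
      = (ofAdd 1 * ofAdd 1, r (p + p), r 0) := by
    rw [trip_mul, r_mul_r, sr_mul_sr, sub_self]
  have hp2 : p + p = 2 := by
    rcases (show ∀ z : ZMod 4, z + z = 0 ∨ z + z = 2 by decide) p with h0 | h2
    · exfalso
      have hmem := mul_mem hg hg
      rw [hgg, h0] at hmem
      have heq := h2inj.1 _ hmem 1 (one_mem Γ) rfl rfl
      exact (by decide : ¬ ((ofAdd 1 * ofAdd 1 : Multiplicative (ZMod 4)) = 1))
        (congrArg Prod.fst heq)
    · exact h2
  -- Step B : find k = (1, sr a, sr b) ∈ Γ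
  obtain ⟨h₀, hh₀, h₀2⟩ := hsd.2.1 (sr 0)
  obtain ⟨d, x₀, y₀⟩ := h₀
  simp only at h₀2
  subst h₀2
  have m2 : ((ofAdd 1 * ofAdd 1, r (p+p), (r 0 : DihedralGroup 4)) : G4) ∈ Γ := by
    rw [← hgg]; exact mul_mem hg hg
  have claim1 : ∃ a y', (((1 : Multiplicative (ZMod 4)), sr a, y') : G4) ∈ Γ := by
    rcases (show ∀ z : Multiplicative (ZMod 4),
        z = 1 ∨ z = ofAdd 1 ∨ z = ofAdd 2 ∨ z = ofAdd 3 by decide) d with hd | hd | hd | hd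
    · subst hd; exact ⟨0, y₀, hh₀⟩
    · -- d = ofAdd 1 : use h₀ * g³
      subst hd
      have e3 : ((ofAdd 1 * ofAdd 1, r (p+p), (r 0 : DihedralGroup 4)) : G4)
          * (ofAdd (1:ZMod 4), r p, sr q)
          = (ofAdd 1 * ofAdd 1 * ofAdd 1, r (p+p+p), sr q) := by
        rw [trip_mul, r_mul_r, r_mul_sr, sub_zero]
      have m3 := e3 ▸ mul_mem m2 hg
      have e4 : ((ofAdd (1:ZMod 4), sr 0, y₀) : G4)
          * (ofAdd 1 * ofAdd 1 * ofAdd 1, r (p+p+p), sr q)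
          = (ofAdd 1 * (ofAdd 1 * ofAdd 1 * ofAdd 1), sr (0 + (p+p+p)), y₀ * sr q) := by
        rw [trip_mul, sr_mul_r]
      have hκ := e4 ▸ mul_mem hh₀ m3
      rw [(by decide : (ofAdd 1 * (ofAdd 1 * ofAdd 1 * ofAdd 1) : Multiplicative (ZMod 4)) = 1)]
        at hκ
      exact ⟨_, _, hκ⟩
    · -- d = ofAdd 2 : use h₀ * g²
      subst hd
      have e4 : ((ofAdd (2:ZMod 4), sr 0, y₀) : G4) * (ofAdd 1 * ofAdd 1, r (p+p), r 0)
          = (ofAdd 2 * (ofAdd 1 * ofAdd 1), sr (0 + (p+p)), y₀ * r 0) := by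
        rw [trip_mul, sr_mul_r]
      have hκ := e4 ▸ mul_mem hh₀ m2
      rw [(by decide : (ofAdd 2 * (ofAdd 1 * ofAdd 1) : Multiplicative (ZMod 4)) = 1)] at hκ
      exact ⟨_, _, hκ⟩
    · -- d = ofAdd 3 : use h₀ * g
      subst hd
      have e4 : ((ofAdd (3:ZMod 4), sr 0, y₀) : G4) * (ofAdd (1:ZMod 4), r p, sr q)
          = (ofAdd 3 * ofAdd 1, sr (0 + p), y₀ * sr q) := by
        rw [trip_mul, sr_mul_r]
      have hκ := e4 ▸ mul_mem hh₀ hg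
      rw [(by decide : (ofAdd 3 * ofAdd 1 : Multiplicative (ZMod 4)) = 1)] at hκ
      exact ⟨_, _, hκ⟩
  obtain ⟨a, y', hky⟩ := claim1
  rcases hy' : y' with f | b
  · subst hy'
    exfalso
    have e : (((1 : Multiplicative (ZMod 4)), sr a, r f) : G4) * (ofAdd (1:ZMod 4), r p, sr q)
        = (1 * ofAdd 1, sr (a + p), sr (q - f)) := by
      rw [trip_mul, sr_mul_r, r_mul_sr]
    exact not_ss h2inj (e ▸ mul_mem hky hg) (by decide)
  subst hy'
  -- Step C : m = (1, r 2, r 2) ∈ Γ  and (q-b)+(q-b) = 2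
  have einv : (((ofAdd (1:ZMod 4), r p, sr q) : G4))⁻¹ = ((ofAdd 1)⁻¹, r (-p), sr q) := by
    rw [trip_inv, r_inv, sr_inv]
  have e1 : (((1 : Multiplicative (ZMod 4)), sr a, sr b) : G4) * ((ofAdd 1)⁻¹, r (-p), sr q)
      = (1 * (ofAdd 1)⁻¹, sr (a + -p), r (q - b)) := by
    rw [trip_mul, sr_mul_r, sr_mul_sr]
  have e2 : ((ofAdd (1:ZMod 4), r p, sr q) : G4) * (1 * (ofAdd 1)⁻¹, sr (a + -p), r (q - b))
      = (ofAdd 1 * (1 * (ofAdd 1)⁻¹), sr (a + -p - p), sr (q + (q - b))) := by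
    rw [trip_mul, r_mul_sr, sr_mul_r]
  have einvk : (((1 : Multiplicative (ZMod 4)), sr a, sr b) : G4)⁻¹ = (1⁻¹, sr a, sr b) := by
    rw [trip_inv, sr_inv, sr_inv]
  have e3 : (((1 : Multiplicative (ZMod 4))⁻¹, sr a, sr b) : G4)
      * (ofAdd 1 * (1 * (ofAdd 1)⁻¹), sr (a + -p - p), sr (q + (q - b)))
      = (1⁻¹ * (ofAdd 1 * (1 * (ofAdd 1)⁻¹)), r (a + -p - p - a), r (q + (q - b) - b)) := by
    rw [trip_mul, sr_mul_sr, sr_mul_sr]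
  have hw : ((1⁻¹ * (ofAdd 1 * (1 * (ofAdd 1)⁻¹)) : Multiplicative (ZMod 4)),
      (r (a + -p - p - a) : DihedralGroup 4), (r (q + (q - b) - b) : DihedralGroup 4)) ∈ Γ := by
    rw [← e3]
    refine mul_mem ?_ ?_
    · rw [← einvk]; exact inv_mem hky
    · rw [← e2]
      refine mul_mem hg ?_
      rw [← e1]
      refine mul_mem hky ?_
      rw [← einv]
      exact inv_mem hg
  rw [(by decide : (1⁻¹ * (ofAdd 1 * (1 * (ofAdd 1)⁻¹)) : Multiplicative (ZMod 4)) = 1),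
    (show a + -p - p - a = 2 from by
      have := (show ∀ p a : ZMod 4, p + p = 2 → a + -p - p - a = 2 by decide) p a hp2
      exact this),
    (show q + (q - b) - b = (q - b) + (q - b) from by ring)] at hw
  have hs2 : (q - b) + (q - b) = 2 := by
    rcases (show ∀ z : ZMod 4, z + z = 0 ∨ z + z = 2 by decide) (q - b) with h0 | h2
    · exfalso
      rw [h0] at hw
      have heq := h2inj.2.1 _ hw 1 (one_mem Γ) rfl rfl
      have : (r 2 : DihedralGroup 4) = r 0 := congrArg (fun z : G4 => z.2.1) heq
      exact (by decide : ¬ ((2 : ZMod 4) = 0)) (r.inj this)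
    · exact h2
  rw [hs2] at hw
  -- hw : (1, r 2, r 2) ∈ Γ
  -- Step D : a type-B element
  have eB : (((1 : Multiplicative (ZMod 4)), sr a, sr b) : G4) * (ofAdd (1:ZMod 4), r p, sr q)
      = (1 * ofAdd 1, sr (a + p), r (q - b)) := by
    rw [trip_mul, sr_mul_r, sr_mul_sr]
  have hBel := eB ▸ mul_mem hky hg
  -- Step E : classification of the kernel of the first projection
  have hKrot : ∀ u v : ZMod 4, (((1 : Multiplicative (ZMod 4)), r u, r v) : G4) ∈ Γ →
      (u = 0 ∧ v = 0) ∨ (u = 2 ∧ v = 2) := by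
    intro u v hmem
    have hc23 := comm_transfer23 h2inj hmem hg (by
      show r u * r p = r p * r u
      rw [r_mul_r, r_mul_r, add_comm])
    have hv0 : v + v = 0 := by
      have h' : r v * sr q = sr q * r v := hc23
      rw [r_mul_sr, sr_mul_r] at h'
      exact (show ∀ q v : ZMod 4, q - v = q + v → v + v = 0 by decide) q v (sr.inj h')
    have hc21 := comm_transfer32 h2inj hmem hBel (by
      show r v * r (q - b) = r (q - b) * r v
      rw [r_mul_r, r_mul_r, add_comm])
    have hu0 : u + u = 0 := by
      have h' : r u * sr (a + p) = sr (a + p) * r u := hc21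
      rw [r_mul_sr, sr_mul_r] at h'
      exact (show ∀ w u : ZMod 4, w - u = w + u → u + u = 0 by decide) (a + p) u (sr.inj h')
    rcases (show ∀ z : ZMod 4, z + z = 0 → z = 0 ∨ z = 2 by decide) u hu0 with hu | hu <;>
      rcases (show ∀ z : ZMod 4, z + z = 0 → z = 0 ∨ z = 2 by decide) v hv0 with hv | hv
    · exact Or.inl ⟨hu, hv⟩
    · exfalso
      have heq := h2inj.2.2 _ hmem 1 (one_mem Γ) rfl (show r u = r 0 by rw [hu])
      have : (r v : DihedralGroup 4) = r 0 := congrArg (fun z : G4 => z.2.2) heq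
      rw [hv] at this
      exact (by decide : ¬ ((r 2 : DihedralGroup 4) = r 0)) this
    · exfalso
      have heq := h2inj.2.1 _ hmem 1 (one_mem Γ) rfl (show r v = r 0 by rw [hv])
      have : (r u : DihedralGroup 4) = r 0 := congrArg (fun z : G4 => z.2.1) heq
      rw [hu] at this
      exact (by decide : ¬ ((r 2 : DihedralGroup 4) = r 0)) this
    · exact Or.inr ⟨hu, hv⟩
  have hK : ∀ γ ∈ Γ, γ.1 = 1 →
      γ = 1 ∨ γ = ((1 : Multiplicative (ZMod 4)), (r 2 : DihedralGroup 4), (r 2 : DihedralGroup 4))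
        ∨ γ = ((1 : Multiplicative (ZMod 4)), sr a, sr b)
        ∨ γ = ((1 : Multiplicative (ZMod 4)), sr (a + 2), sr (b + 2)) := by
    intro γ hγ h1
    obtain ⟨c, x, y⟩ := γ
    simp only at h1
    subst h1
    rcases x with u | u <;> rcases y with v | v
    · rcases hKrot u v hγ with ⟨hu, hv⟩ | ⟨hu, hv⟩
      · left; rw [hu, hv]; rfl
      · right; left; rw [hu, hv]
    · exfalso
      have e : (((1 : Multiplicative (ZMod 4)), r u, sr v) : G4) * (ofAdd (1:ZMod 4), r p, sr q)
          = (1 * ofAdd 1, r (u + p), r (q - v)) := by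
        rw [trip_mul, r_mul_r, sr_mul_sr]
      exact not_rr h2inj hsd (e ▸ mul_mem hγ hg) (by decide)
    · exfalso
      have e : (((1 : Multiplicative (ZMod 4)), sr u, r v) : G4) * (ofAdd (1:ZMod 4), r p, sr q)
          = (1 * ofAdd 1, sr (u + p), sr (q - v)) := by
        rw [trip_mul, sr_mul_r, r_mul_sr]
      exact not_ss h2inj (e ▸ mul_mem hγ hg) (by decide)
    · have e : (((1 : Multiplicative (ZMod 4))⁻¹, sr a, sr b) : G4) * (1, sr u, sr v)
          = (1⁻¹ * 1, r (u - a), r (v - b)) := by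
        rw [trip_mul, sr_mul_sr, sr_mul_sr]
      have hκ' := e ▸ mul_mem (einvk ▸ inv_mem hky) hγ
      rw [(by decide : ((1:Multiplicative (ZMod 4))⁻¹ * 1 : Multiplicative (ZMod 4)) = 1)] at hκ'
      rcases hKrot _ _ hκ' with ⟨hu, hv⟩ | ⟨hu, hv⟩
      · right; right; left
        rw [sub_eq_zero.mp hu, sub_eq_zero.mp hv]
      · right; right; right
        rw [show u = a + 2 by linear_combination hu, show v = b + 2 by linear_combination hv]
  -- Step F : normal form
  have hNF : ∀ γ ∈ Γ, ∃ ε δ n : ℕ, ε ≤ 1 ∧ δ ≤ 1 ∧ n ≤ 3 ∧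
      γ = ((1 : Multiplicative (ZMod 4)), (r 2:DihedralGroup 4), (r 2:DihedralGroup 4)) ^ ε
        * ((1 : Multiplicative (ZMod 4)), (sr a:DihedralGroup 4), (sr b:DihedralGroup 4)) ^ δ
        * ((ofAdd (1:ZMod 4), r p, sr q) : G4) ^ n := by
    have hkm : ((1 : Multiplicative (ZMod 4)), (sr (a+2) : DihedralGroup 4),
        (sr (b+2) : DihedralGroup 4))
        = ((1 : Multiplicative (ZMod 4)), (r 2:DihedralGroup 4), (r 2:DihedralGroup 4))
          * ((1 : Multiplicative (ZMod 4)), sr a, sr b) := by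
      rw [trip_mul, r_mul_sr, r_mul_sr, one_mul,
        (show ∀ z : ZMod 4, z + 2 = z - 2 by decide) a,
        (show ∀ z : ZMod 4, z + 2 = z - 2 by decide) b]
    intro γ hγ
    have build : ∀ j : ℕ, j ≤ 3 →
        (γ * (((ofAdd (1:ZMod 4), r p, sr q) : G4) ^ j)⁻¹) ∈ Γ →
        (γ * (((ofAdd (1:ZMod 4), r p, sr q) : G4) ^ j)⁻¹).1 = 1 →
        ∃ ε δ n : ℕ, ε ≤ 1 ∧ δ ≤ 1 ∧ n ≤ 3 ∧
        γ = ((1 : Multiplicative (ZMod 4)), (r 2:DihedralGroup 4), (r 2:DihedralGroup 4)) ^ ε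
          * ((1 : Multiplicative (ZMod 4)), (sr a:DihedralGroup 4), (sr b:DihedralGroup 4)) ^ δ
          * ((ofAdd (1:ZMod 4), r p, sr q) : G4) ^ n := by
      intro j hj hmem' h1
      rcases hK _ hmem' h1 with h | h | h | h
      · refine ⟨0, 0, j, by norm_num, by norm_num, hj, ?_⟩
        rw [pow_zero, pow_zero, one_mul, one_mul]
        have h' := mul_inv_eq_iff_eq_mul.mp h
        rw [one_mul] at h'
        exact h'
      · refine ⟨1, 0, j, le_refl 1, by norm_num, hj, ?_⟩
        rw [pow_one, pow_zero, mul_one]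
        exact mul_inv_eq_iff_eq_mul.mp h
      · refine ⟨0, 1, j, by norm_num, le_refl 1, hj, ?_⟩
        rw [pow_zero, pow_one, one_mul]
        exact mul_inv_eq_iff_eq_mul.mp h
      · refine ⟨1, 1, j, le_refl 1, le_refl 1, hj, ?_⟩
        rw [pow_one, pow_one]
        have h' := mul_inv_eq_iff_eq_mul.mp h
        rw [hkm] at h'
        exact h'
    rcases (show ∀ z : Multiplicative (ZMod 4),
        z = 1 ∨ z = ofAdd 1 ∨ z = ofAdd 2 ∨ z = ofAdd 3 by decide) γ.1 with hc | hc | hc | hc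
    · refine build 0 (by norm_num) (mul_mem hγ (inv_mem (pow_mem hg 0))) ?_
      show γ.1 * ((ofAdd (1:ZMod 4)) ^ 0)⁻¹ = 1
      rw [hc]; decide
    · refine build 1 (by norm_num) (mul_mem hγ (inv_mem (pow_mem hg 1))) ?_
      show γ.1 * ((ofAdd (1:ZMod 4)) ^ 1)⁻¹ = 1
      rw [hc]; decide
    · refine build 2 (by norm_num) (mul_mem hγ (inv_mem (pow_mem hg 2))) ?_
      show γ.1 * ((ofAdd (1:ZMod 4)) ^ 2)⁻¹ = 1
      rw [hc]; decide
    · refine build 3 (by norm_num) (mul_mem hγ (inv_mem (pow_mem hg 3))) ?_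
      show γ.1 * ((ofAdd (1:ZMod 4)) ^ 3)⁻¹ = 1
      rw [hc]; decide
  -- Step G : the homomorphism ψ
  have hpp : p * p = 1 := (show ∀ z : ZMod 4, z + z = 2 → z * z = 1 by decide) p hp2
  have hss : (q - b) * (q - b) = 1 :=
    (show ∀ z : ZMod 4, z + z = 2 → z * z = 1 by decide) (q - b) hs2
  set ψ : G4 →* (DihedralGroup 4 × DihedralGroup 4 × DihedralGroup 4) :=
    rmap.prodMap ((dmap p (-(p*a))).prodMap (dmap (q-b) (-((q-b)*b)))) with hψdef
  have hψg : ψ (ofAdd (1:ZMod 4), r p, sr q) = tg := by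
    show ((r (1 : ZMod 4) : DihedralGroup 4), (r (p * p) : DihedralGroup 4),
      (sr ((q-b) * q + -((q-b)*b)) : DihedralGroup 4)) = tg
    rw [show tg = ((r 1 : DihedralGroup 4), (r 1 : DihedralGroup 4),
      (sr 1 : DihedralGroup 4)) from rfl, hpp,
      (show ∀ z w : ZMod 4, (z-w) + (z-w) = 2 → (z-w) * z + -((z-w)*w) = 1 by decide) q b hs2]
  have hψk : ψ ((1 : Multiplicative (ZMod 4)), sr a, sr b) = tk := by
    show ((r (0 : ZMod 4) : DihedralGroup 4), (sr (p * a + -(p*a)) : DihedralGroup 4),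
      (sr ((q-b) * b + -((q-b)*b)) : DihedralGroup 4)) = tk
    rw [show tk = ((1 : DihedralGroup 4), (sr 0 : DihedralGroup 4),
      (sr 0 : DihedralGroup 4)) from rfl,
      (show ∀ z : ZMod 4, z + -z = 0 by decide) (p*a),
      (show ∀ z : ZMod 4, z + -z = 0 by decide) ((q-b)*b), ← one_def]
  have hψm : ψ ((1 : Multiplicative (ZMod 4)), (r 2:DihedralGroup 4), (r 2:DihedralGroup 4))
      = tm := by
    show ((r (0 : ZMod 4) : DihedralGroup 4), (r (p * 2) : DihedralGroup 4),
      (r ((q-b) * 2) : DihedralGroup 4)) = tm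
    rw [show tm = ((1 : DihedralGroup 4), (r 2 : DihedralGroup 4),
      (r 2 : DihedralGroup 4)) from rfl,
      (show ∀ z : ZMod 4, z + z = 2 → z * 2 = 2 by decide) p hp2,
      (show ∀ z : ZMod 4, z + z = 2 → z * 2 = 2 by decide) (q-b) hs2, ← one_def]
  have hmemT : ∀ z ∈ Γ, ψ z ∈ T := by
    intro z hz
    obtain ⟨ε, δ, n, -, -, -, rfl⟩ := hNF z hz
    rw [map_mul, map_mul, map_pow, map_pow, map_pow, hψg, hψk, hψm]
    exact mul_mem (mul_mem (pow_mem tm_memT _) (pow_mem tk_memT _)) (pow_mem tg_memT _)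
  have hψinj : Function.Injective ⇑ψ := by
    intro x y h
    have e1 : rmap x.1 = rmap y.1 := congrArg (fun z => z.1) h
    have e2 : dmap p (-(p*a)) x.2.1 = dmap p (-(p*a)) y.2.1 := congrArg (fun z => z.2.1) h
    have e3 : dmap (q-b) (-((q-b)*b)) x.2.2 = dmap (q-b) (-((q-b)*b)) y.2.2 :=
      congrArg (fun z => z.2.2) h
    exact Prod.ext_iff.mpr ⟨rmap_inj e1,
      Prod.ext_iff.mpr ⟨dmap_inj _ hpp e2, dmap_inj _ hss e3⟩⟩
  have hΦmem : ∀ x : Γ, (ψ.comp Γ.subtype) x ∈ T := fun x => hmemT x x.2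
  set Φ : Γ →* T := (ψ.comp Γ.subtype).codRestrict T hΦmem with hΦdef
  have hΦinj : Function.Injective ⇑Φ := by
    intro x y hxy
    have h' : ψ (x : G4) = ψ (y : G4) := congrArg Subtype.val hxy
    exact Subtype.ext (hψinj h')
  have hΦsurj : Function.Surjective ⇑Φ := by
    rintro ⟨τ, hτ⟩
    obtain ⟨ε, δ, n, hxeq⟩ := T_decomp τ hτ
    refine ⟨⟨((1 : Multiplicative (ZMod 4)), (r 2:DihedralGroup 4), (r 2:DihedralGroup 4)) ^ (ε:ℕ)
      * ((1 : Multiplicative (ZMod 4)), (sr a:DihedralGroup 4), (sr b:DihedralGroup 4)) ^ (δ:ℕ)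
      * ((ofAdd (1:ZMod 4), r p, sr q) : G4) ^ (n:ℕ),
      mul_mem (mul_mem (pow_mem hw _) (pow_mem hky _)) (pow_mem hg _)⟩, ?_⟩
    apply Subtype.ext
    show ψ (((1 : Multiplicative (ZMod 4)), (r 2:DihedralGroup 4), (r 2:DihedralGroup 4)) ^ (ε:ℕ)
      * ((1 : Multiplicative (ZMod 4)), (sr a:DihedralGroup 4), (sr b:DihedralGroup 4)) ^ (δ:ℕ)
      * ((ofAdd (1:ZMod 4), r p, sr q) : G4) ^ (n:ℕ)) = τ
    rw [map_mul, map_mul, map_pow, map_pow, map_pow, hψg, hψk, hψm]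
    exact hxeq.symm
  exact ⟨MulEquiv.ofBijective Φ ⟨hΦinj, hΦsurj⟩⟩

end Phase2main

section Reduce2
open Multiplicative

variable {n₂ n₃ : ℕ}

def sw (n₂ n₃ : ℕ) : (Multiplicative (ZMod 4) × DihedralGroup n₂ × DihedralGroup n₃) ≃*
    (Multiplicative (ZMod 4) × DihedralGroup n₃ × DihedralGroup n₂) where
  toFun := fun z => (z.1, z.2.2, z.2.1)
  invFun := fun z => (z.1, z.2.2, z.2.1)
  left_inv := fun _ => rfl
  right_inv := fun _ => rfl
  map_mul' := fun _ _ => rfl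

lemma swap_subdirect
    {Γ : Subgroup (Multiplicative (ZMod 4) × DihedralGroup n₂ × DihedralGroup n₃)}
    (hsd : IsSubdirect3 Γ) : IsSubdirect3 (Γ.map (sw n₂ n₃).toMonoidHom) := by
  refine ⟨fun x => ?_, fun x => ?_, fun x => ?_⟩
  · obtain ⟨g, hg, h⟩ := hsd.1 x
    exact ⟨sw n₂ n₃ g, Subgroup.mem_map_of_mem _ hg, h⟩
  · obtain ⟨g, hg, h⟩ := hsd.2.2 x
    exact ⟨sw n₂ n₃ g, Subgroup.mem_map_of_mem _ hg, h⟩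
  · obtain ⟨g, hg, h⟩ := hsd.2.1 x
    exact ⟨sw n₂ n₃ g, Subgroup.mem_map_of_mem _ hg, h⟩

lemma swap_twoinj
    {Γ : Subgroup (Multiplicative (ZMod 4) × DihedralGroup n₂ × DihedralGroup n₃)}
    (h2inj : IsTwoInjective3 Γ) : IsTwoInjective3 (Γ.map (sw n₂ n₃).toMonoidHom) := by
  have memiff : ∀ x, x ∈ Γ.map (sw n₂ n₃).toMonoidHom →
      ((x.1, x.2.2, x.2.1) : Multiplicative (ZMod 4) × DihedralGroup n₂ × DihedralGroup n₃)
        ∈ Γ := by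
    intro x hx
    rw [Subgroup.mem_map] at hx
    obtain ⟨y, hy, rfl⟩ := hx
    exact hy
  refine ⟨?_, ?_, ?_⟩
  · intro g hg h hh e1 e2
    have heq := h2inj.1 _ (memiff g hg) _ (memiff h hh) e2 e1
    exact Prod.ext_iff.mpr ⟨congrArg (fun z => z.1) heq, Prod.ext_iff.mpr
      ⟨congrArg (fun z => z.2.2) heq, congrArg (fun z => z.2.1) heq⟩⟩
  · intro g hg h hh e1 e2
    have heq := h2inj.2.2 _ (memiff g hg) _ (memiff h hh) e1 e2
    exact Prod.ext_iff.mpr ⟨congrArg (fun z => z.1) heq, Prod.ext_iff.mpr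
      ⟨congrArg (fun z => z.2.2) heq, congrArg (fun z => z.2.1) heq⟩⟩
  · intro g hg h hh e1 e2
    have heq := h2inj.2.1 _ (memiff g hg) _ (memiff h hh) e1 e2
    exact Prod.ext_iff.mpr ⟨congrArg (fun z => z.1) heq, Prod.ext_iff.mpr
      ⟨congrArg (fun z => z.2.2) heq, congrArg (fun z => z.2.1) heq⟩⟩

lemma reduce_to_four (h₂ : 2 < n₂) (h₃ : 2 < n₃)
    (Γ : Subgroup (Multiplicative (ZMod 4) × DihedralGroup n₂ × DihedralGroup n₃))
    (hsd : IsSubdirect3 Γ) (h2inj : IsTwoInjective3 Γ) :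
    n₂ = 4 ∧ n₃ = 4 ∧
      ((∃ p q, ((ofAdd (1:ZMod 4), r p, sr q) :
          Multiplicative (ZMod 4) × DihedralGroup n₂ × DihedralGroup n₃) ∈ Γ) ∨
        (∃ p q, ((ofAdd (1:ZMod 4), sr q, r p) :
          Multiplicative (ZMod 4) × DihedralGroup n₂ × DihedralGroup n₃) ∈ Γ)) := by
  obtain ⟨g0, hg0, hg01⟩ := hsd.1 (ofAdd 1)
  obtain ⟨c, x, y⟩ := g0
  simp only at hg01
  subst hg01
  rcases x with u | u <;> rcases y with v | v
  · exact (not_rr h2inj hsd hg0 (by decide)).elim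
  · -- type A : (ofAdd 1, r u, sr v)
    have hB : ∃ (cB : Multiplicative (ZMod 4)) (e : ZMod n₂) (f : ZMod n₃), ((cB, sr e, r f) :
        Multiplicative (ZMod 4) × DihedralGroup n₂ × DihedralGroup n₃) ∈ Γ := by
      obtain ⟨h₀, hh₀, h₀2⟩ := hsd.2.1 (sr 0)
      obtain ⟨d, x₀, y₀⟩ := h₀
      simp only at h₀2
      subst h₀2
      rcases hy₀ : y₀ with f | f
      · subst hy₀; exact ⟨d, 0, f, hh₀⟩
      · subst hy₀
        have e : ((d, sr (0:ZMod n₂), sr f) :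
            Multiplicative (ZMod 4) × DihedralGroup n₂ × DihedralGroup n₃)
            * (ofAdd (1:ZMod 4), r u, sr v)
            = (d * ofAdd 1, sr (0 + u), r (v - f)) := by
          rw [trip_mul, sr_mul_r, sr_mul_sr]
        exact ⟨_, _, _, e ▸ mul_mem hh₀ hg0⟩
    obtain ⟨cB, e, f, hBel⟩ := hB
    have hn3 : n₃ = 4 := n3_eq_four h2inj hsd h₃ hg0 hBel
    have hn2 : n₂ = 4 :=
      n3_eq_four (swap_twoinj h2inj) (swap_subdirect hsd) h₂
        (Subgroup.mem_map_of_mem _ hBel) (Subgroup.mem_map_of_mem _ hg0)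
    exact ⟨hn2, hn3, Or.inl ⟨u, v, hg0⟩⟩
  · -- type B : (ofAdd 1, sr u, r v)
    have hA : ∃ (cA : Multiplicative (ZMod 4)) (pp : ZMod n₂) (ii : ZMod n₃), ((cA, r pp, sr ii) :
        Multiplicative (ZMod 4) × DihedralGroup n₂ × DihedralGroup n₃) ∈ Γ := by
      obtain ⟨k₀, hk₀, hk₀3⟩ := hsd.2.2 (sr 0)
      obtain ⟨d, x₀, y₀⟩ := k₀
      simp only at hk₀3
      subst hk₀3
      rcases hx₀ : x₀ with w | w
      · subst hx₀; exact ⟨d, w, 0, hk₀⟩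
      · subst hx₀
        have e : ((d, sr w, sr (0:ZMod n₃)) :
            Multiplicative (ZMod 4) × DihedralGroup n₂ × DihedralGroup n₃)
            * (ofAdd (1:ZMod 4), sr u, r v)
            = (d * ofAdd 1, r (u - w), sr (0 + v)) := by
          rw [trip_mul, sr_mul_sr, sr_mul_r]
        exact ⟨_, _, _, e ▸ mul_mem hk₀ hg0⟩
    obtain ⟨cA, pp, ii, hAel⟩ := hA
    have hn3 : n₃ = 4 := n3_eq_four h2inj hsd h₃ hAel hg0
    have hn2 : n₂ = 4 :=
      n3_eq_four (swap_twoinj h2inj) (swap_subdirect hsd) h₂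
        (Subgroup.mem_map_of_mem _ hg0) (Subgroup.mem_map_of_mem _ hAel)
    exact ⟨hn2, hn3, Or.inr ⟨v, u, hg0⟩⟩
  · exact (not_ss h2inj hg0 (by decide)).elim

end Reduce2

end CFIaux

theorem statement_14 {n₂ n₃ : ℕ} (h₂ : 2 < n₂) (h₃ : 2 < n₃)
    (Γ : Subgroup (Multiplicative (ZMod 4) × DihedralGroup n₂ × DihedralGroup n₃))
    (hsd : IsSubdirect3 Γ) (h2inj : IsTwoInjective3 Γ) :
    n₂ = 4 ∧ n₃ = 4 ∧
      Nonempty (Γ ≃* ↥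
        (doubleCFI ⊓ rotD4.prod (⊤ : Subgroup (DihedralGroup 4 × DihedralGroup 4)))) := by
  obtain ⟨hn2, hn3, hmix⟩ := CFIaux.reduce_to_four h₂ h₃ Γ hsd h2inj
  subst hn2
  subst hn3
  refine ⟨rfl, rfl, ?_⟩
  rcases hmix with ⟨p, q, hgel⟩ | ⟨p, q, hgel⟩
  · exact CFIaux.phase2 Γ hsd h2inj hgel
  · obtain ⟨e⟩ := CFIaux.phase2 (Γ.map (CFIaux.sw 4 4).toMonoidHom)
      (CFIaux.swap_subdirect hsd) (CFIaux.swap_twoinj h2inj)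
      (Subgroup.mem_map_of_mem _ hgel)
    exact ⟨(Subgroup.equivMapOfInjective Γ (CFIaux.sw 4 4).toMonoidHom
      (CFIaux.sw 4 4).injective).trans e⟩
end

section
/- Let Γ ≤ C_{n₁} × D_{n₂} × D_{n₃} be a 2-injective 3-factor subdirect product. Then exactly one of the following holds: (1) n₁ ≤ 2, n₂, n₃ > 2, and the projection π̄₁(Γ) of Γ onto the two dihedral factors is a rotate-or-reflect group; (2) n₁ = n₂ = n₃ = 4 and Γ is isomorphic to Δ ∩ (rot(D₄) × D₄ × D₄), where Δ is the double CFI group; (3) n₁, n₂, n₃ ≤ 2 and Γ is abelian. Furthermore, for n > 2 there are no 2-injective 3-factor subdirect products of Dₙ × G₂ × G₃ when G₂ and G₃ are abelian groups. -/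
set_option maxRecDepth 8000


----------------------------------------------------------------
-- Support code
----------------------------------------------------------------

namespace SDP

open DihedralGroup

theorem inv_r {n : ℕ} (i : ZMod n) : (r i)⁻¹ = r (-i) := rfl
theorem inv_sr {n : ℕ} (i : ZMod n) : (sr i)⁻¹ = sr i := rfl

/-- The model group of order 16. -/
def M16 := ZMod 4 × ZMod 4

instance : DecidableEq M16 := inferInstanceAs (DecidableEq (ZMod 4 × ZMod 4))
instance : Fintype M16 := inferInstanceAs (Fintype (ZMod 4 × ZMod 4))
instance : Mul M16 := ⟨fun p q => (p.1 + q.1 + 2*(p.2*q.1), p.2 + q.2 + 2*(p.2*q.1))⟩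
instance : One M16 := ⟨((0 : ZMod 4), (0 : ZMod 4))⟩
instance : Inv M16 := ⟨fun p => (-p.1 - 2*(p.1*p.2), -p.2 - 2*(p.1*p.2))⟩
instance : Group M16 := Group.ofLeftAxioms (by decide) (by decide) (by decide)

theorem M16.mul_def (p q : M16) :
    p * q = (p.1 + q.1 + 2*(p.2*q.1), p.2 + q.2 + 2*(p.2*q.1)) := rfl

theorem M16.one_def : (1 : M16) = ((0 : ZMod 4), (0 : ZMod 4)) := rfl

section GenHom

variable {G : Type*} [Group G] {u v : G}

theorem K1 (hc2 : Commute (v^2) u) (hr : v * u = u^3 * v^3) (k : ℕ) :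
    v * u^k = u^(3*k) * v^(2*k+1) := by
  induction k with
  | zero => simp
  | succ k ih =>
    have hcomm : Commute (v^(2*k)) (u^3) := by
      have : Commute (v^(2*k)) u := by rw [pow_mul]; exact hc2.pow_left k
      exact this.pow_right 3
    calc v * u^(k+1) = (v * u^k) * u := by rw [pow_succ, mul_assoc]
    _ = u^(3*k) * (v^(2*k) * (v * u)) := by
        rw [ih, pow_succ, mul_assoc, mul_assoc]
    _ = u^(3*k) * ((v^(2*k) * u^3) * v^3) := by rw [hr, mul_assoc]
    _ = u^(3*k) * (u^3 * (v^(2*k) * v^3)) := by rw [hcomm.eq, mul_assoc]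
    _ = u^(3*(k+1)) * v^(2*(k+1)+1) := by
        rw [← mul_assoc, ← pow_add, ← pow_add]
        congr 1 <;> ring

theorem K2 (hu : u^4 = 1) (hv : v^4 = 1) (hc2 : Commute (v^2) u) (hr : v * u = u^3 * v^3) :
    ∀ j k : ℕ, v^j * u^k = u^((k + 2*(j*k)) % 4) * v^((j + 2*(j*k)) % 4) := by
  intro j
  induction j with
  | zero =>
    intro k
    have h0 : (k + 2*(0*k)) % 4 = k % 4 := by omega
    have h1 : (0 + 2*(0*k)) % 4 = 0 := by omega
    rw [h0, h1, pow_zero, one_mul, mul_one, ← pow_eq_pow_mod k hu]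
  | succ j ih =>
    intro k
    obtain ⟨m, hm⟩ : ∃ m, j*k = m := ⟨_, rfl⟩
    calc v^(j+1) * u^k = v^j * (v * u^k) := by rw [pow_succ, mul_assoc]
    _ = v^j * (u^(3*k) * v^(2*k+1)) := by rw [K1 hc2 hr k]
    _ = (v^j * u^(3*k)) * v^(2*k+1) := by rw [mul_assoc]
    _ = (u^((3*k + 2*(j*(3*k))) % 4) * v^((j + 2*(j*(3*k))) % 4)) * v^(2*k+1) := by
        rw [ih (3*k)]
    _ = u^((3*k + 2*(j*(3*k))) % 4) * v^(((j + 2*(j*(3*k))) % 4) + (2*k+1)) := by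
        rw [mul_assoc, ← pow_add]
    _ = u^((k + 2*((j+1)*k)) % 4) * v^((j + 1 + 2*((j+1)*k)) % 4) := by
        have e3 : j*(3*k) = 3*m := by rw [← hm]; ring
        have e4 : (j+1)*k = m + k := by rw [← hm]; ring
        rw [pow_eq_pow_mod (((j + 2*(j*(3*k))) % 4) + (2*k+1)) hv, e3, e4]
        have e1 : (3*k + 2*(3*m)) % 4 = (k + 2*(m + k)) % 4 := by omega
        have e2 : ((j + 2*(3*m)) % 4 + (2*k+1)) % 4 = (j + 1 + 2*(m+k)) % 4 := by omega
        rw [e1, e2]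

/-- `u^i * v^j` for a pair of exponents in `M16`. -/
def mpow (u v : G) (p : M16) : G := u ^ p.1.val * v ^ p.2.val

theorem Zval3 : ∀ x y z w : ZMod 4,
    (x + y + 2*(z*w)).val = (x.val + y.val + 2*(z.val*w.val)) % 4 := by decide

theorem mpow_mul (hu : u^4 = 1) (hv : v^4 = 1) (hc2 : Commute (v^2) u)
    (hr : v * u = u^3 * v^3) (p q : M16) :
    mpow u v (p * q) = mpow u v p * mpow u v q := by
  show u ^ ((p.1 + q.1 + 2*(p.2*q.1)).val) * v ^ ((p.2 + q.2 + 2*(p.2*q.1)).val)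
      = (u ^ p.1.val * v ^ p.2.val) * (u ^ q.1.val * v ^ q.2.val)
  obtain ⟨m, hm⟩ : ∃ m, p.2.val * q.1.val = m := ⟨_, rfl⟩
  rw [Zval3, Zval3, hm]

  have step : (u ^ p.1.val * v ^ p.2.val) * (u ^ q.1.val * v ^ q.2.val)
      = u ^ p.1.val * ((v ^ p.2.val * u ^ q.1.val) * v ^ q.2.val) := by
    rw [mul_assoc, mul_assoc]
  rw [step, K2 hu hv hc2 hr p.2.val q.1.val, hm]
  rw [mul_assoc, ← pow_add, ← mul_assoc, ← pow_add]
  rw [pow_eq_pow_mod (p.1.val + (q.1.val + 2*m) % 4) hu,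
      pow_eq_pow_mod ((p.2.val + 2*m) % 4 + q.2.val) hv]
  have e1 : (p.1.val + q.1.val + 2*m) % 4 = (p.1.val + (q.1.val + 2*m) % 4) % 4 := by omega
  have e2 : (p.2.val + q.2.val + 2*m) % 4 = ((p.2.val + 2*m) % 4 + q.2.val) % 4 := by omega
  rw [e1, e2]

theorem mpow_one (u v : G) : mpow u v 1 = 1 := by
  show u ^ (0 : ZMod 4).val * v ^ (0 : ZMod 4).val = 1
  simp [ZMod.val_zero]

/-- The homomorphism `M16 →* G` sending the generators to `u` and `v`. -/
def genHom (u v : G) (hu : u^4 = 1) (hv : v^4 = 1) (hc2 : Commute (v^2) u)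
    (hr : v * u = u^3 * v^3) : M16 →* G where
  toFun := mpow u v
  map_one' := mpow_one u v
  map_mul' := mpow_mul hu hv hc2 hr

@[simp] theorem genHom_apply (u v : G) (hu : u^4 = 1) (hv : v^4 = 1) (hc2 : Commute (v^2) u)
    (hr : v * u = u^3 * v^3) (p : M16) :
    genHom u v hu hv hc2 hr p = u ^ p.1.val * v ^ p.2.val := rfl

end GenHom

----------------------------------------------------------------
-- The concrete side: the double CFI group
----------------------------------------------------------------

abbrev D43 := DihedralGroup 4 × DihedralGroup 4 × DihedralGroup 4

def U : D43 := (r 1, r 1, sr 1)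
def V : D43 := (r 1, sr 1, r 1)
def gg : D43 := (sr 0, 1, sr 0)

theorem hU4 : U^4 = 1 := by decide
theorem hV4 : V^4 = 1 := by decide
theorem hcV : Commute (V^2) U := by show V^2 * U = U * V^2; decide
theorem hrelUV : V * U = U^3 * V^3 := by decide
theorem gg_sq : gg * gg = 1 := by decide

def fD : M16 →* D43 := genHom U V hU4 hV4 hcV hrelUV

theorem fD_apply (p : M16) : fD p = U ^ p.1.val * V ^ p.2.val := rfl

theorem U_mem : U ∈ doubleCFI := Subgroup.subset_closure (Or.inr (Or.inr rfl))
theorem gg_mem : gg ∈ doubleCFI := Subgroup.subset_closure (Or.inr (Or.inl rfl))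

theorem V_mem : V ∈ doubleCFI := by
  have h1 : ((1 : DihedralGroup 4), sr 0, sr 0) ∈ doubleCFI :=
    Subgroup.subset_closure (Or.inl rfl)
  have h3 := U_mem
  have hmul := mul_mem h1 h3
  have he : ((1 : DihedralGroup 4), sr 0, sr 0) * U = V := by decide
  rwa [he] at hmul

theorem fD_mem_cfi (p : M16) : fD p ∈ doubleCFI :=
  mul_mem (pow_mem U_mem _) (pow_mem V_mem _)

theorem FROT : ∀ p : M16, ∃ k : ZMod 4, (U ^ p.1.val * V ^ p.2.val).1 = r k := by decide

/-- The target group `Δ ∩ (rot(D₄) × D₄ × D₄)`. -/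
def Tgrp : Subgroup D43 :=
  doubleCFI ⊓ rotD4.prod (⊤ : Subgroup (DihedralGroup 4 × DihedralGroup 4))

theorem fD_mem_T (p : M16) : fD p ∈ Tgrp := by
  refine Subgroup.mem_inf.mpr ⟨fD_mem_cfi p, Subgroup.mem_prod.mpr ⟨?_, trivial⟩⟩
  obtain ⟨k, hk⟩ := FROT p
  exact ⟨k, hk⟩

def fT : M16 →* ↥Tgrp := fD.codRestrict Tgrp fD_mem_T

theorem TINJ : ∀ p q : M16,
    U ^ p.1.val * V ^ p.2.val = U ^ q.1.val * V ^ q.2.val → p = q := by decide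

theorem fT_injective : Function.Injective fT := by
  intro p q h
  have : fD p = fD q := congrArg Subtype.val h
  exact TINJ p q this

theorem GCONJ : ∀ p : M16, ∃ q : M16,
    gg * (U ^ p.1.val * V ^ p.2.val) * gg = U ^ q.1.val * V ^ q.2.val := by decide

theorem conjR : ∀ x ∈ fD.range, gg * x * gg ∈ fD.range := by
  rintro x ⟨p, rfl⟩
  obtain ⟨q, hq⟩ := GCONJ p
  exact ⟨q, hq.symm⟩

def Sbound : Subgroup D43 where
  carrier := {x | x ∈ fD.range ∨ gg * x ∈ fD.range}
  one_mem' := Or.inl (one_mem _)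
  mul_mem' := by
    rintro a b (ha | ha) (hb | hb)
    · exact Or.inl (mul_mem ha hb)
    · refine Or.inr ?_
      have h := mul_mem (conjR a ha) hb
      have he : gg * a * gg * (gg * b) = gg * (a * b) := by
        rw [mul_assoc (gg * a) gg (gg * b), ← mul_assoc gg gg b, gg_sq, one_mul,
          mul_assoc gg a b]
      rwa [he] at h
    · refine Or.inr ?_
      have h := mul_mem ha hb
      rwa [mul_assoc] at h
    · refine Or.inl ?_
      have h := mul_mem (conjR _ ha) hb
      have he : gg * (gg * a) * gg * (gg * b) = a * b := by
        rw [← mul_assoc gg gg a, gg_sq, one_mul, mul_assoc a, ← mul_assoc gg gg b,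
          gg_sq, one_mul]
      rwa [he] at h
  inv_mem' := by
    rintro a (ha | ha)
    · exact Or.inl (inv_mem ha)
    · refine Or.inr ?_
      have h := conjR _ (inv_mem ha)
      have he : gg * (gg * a)⁻¹ * gg = gg * a⁻¹ := by
        rw [mul_inv_rev, ← mul_assoc, mul_assoc (gg * a⁻¹)]
        have : gg⁻¹ = gg := by decide
        rw [this, gg_sq, mul_one]
      rwa [he] at h

theorem delta_le_Sbound : doubleCFI ≤ Sbound := by
  rw [doubleCFI]
  refine (Subgroup.closure_le _).mpr ?_
  rintro x hx
  simp only [Set.mem_insert_iff, Set.mem_singleton_iff] at hx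
  rcases hx with rfl | rfl | rfl
  · exact Or.inl ⟨(((1 : ZMod 4), (3 : ZMod 4)) : M16), by decide⟩
  · refine Or.inr ?_
    have : gg * (sr 0, 1, sr 0) = 1 := gg_sq
    rw [show ((sr 0 : DihedralGroup 4), (1 : DihedralGroup 4), sr 0) = gg from rfl, gg_sq]
    exact one_mem _
  · exact Or.inl ⟨(((1 : ZMod 4), (0 : ZMod 4)) : M16), by decide⟩

theorem fT_surjective : Function.Surjective fT := by
  rintro ⟨t, ht⟩
  obtain ⟨hcfi, hpr⟩ := Subgroup.mem_inf.mp ht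
  rcases delta_le_Sbound hcfi with h | h
  · obtain ⟨p, hp⟩ := h
    exact ⟨p, Subtype.ext hp⟩
  · exfalso
    obtain ⟨p, hp⟩ := h
    obtain ⟨i, hi⟩ := (Subgroup.mem_prod.mp hpr).1
    obtain ⟨k, hk⟩ := FROT p
    have h1 : (fD p).1 = (gg * t).1 := congrArg Prod.fst hp
    rw [fD_apply] at h1
    rw [hk] at h1
    have h2 : (gg * t).1 = sr (0 + i) := by
      have : (gg * t).1 = gg.1 * t.1 := rfl
      rw [this, hi]
      rfl
    rw [h2] at h1
    exact absurd h1 (by simp)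

/-- The concrete equivalence. -/
noncomputable def eT : M16 ≃* ↥Tgrp :=
  MulEquiv.ofBijective fT ⟨fT_injective, fT_surjective⟩

end SDP

namespace SDP

open DihedralGroup

theorem r_inj {n : ℕ} {i j : ZMod n} (h : (r i : DihedralGroup n) = r j) : i = j := by
  injection h

theorem rotrefl {n : ℕ} (x : DihedralGroup n) : (∃ i, x = r i) ∨ (∃ i, x = sr i) := by
  cases x with
  | r i => exact Or.inl ⟨i, rfl⟩
  | sr i => exact Or.inr ⟨i, rfl⟩

theorem dih_comm {n : ℕ} (h0 : 0 < n) (h2 : n ≤ 2) (x y : DihedralGroup n) :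
    x * y = y * x := by
  interval_cases n
  · revert x y; decide
  · revert x y; decide

theorem dih_sq {n : ℕ} (h0 : 0 < n) (h2 : n ≤ 2) (x : DihedralGroup n) : x * x = 1 := by
  interval_cases n
  · revert x; decide
  · revert x; decide

theorem dih4 : ∀ x : DihedralGroup 4, x ^ 4 = 1 := by decide

theorem ODD : ∀ x : ZMod 4, (1 - x) + (1 - x) = 0 → x = 1 ∨ x = 3 := by decide

theorem TWO4 : ∀ s t : Multiplicative (ZMod 4),
    ¬(s * s = 1) → ¬(t * t = 1) → t * s = s^3 * t^3 := by decide

theorem M1sq : ∀ s : Multiplicative (ZMod 1), s * s = 1 := by decide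
theorem M2sq : ∀ s : Multiplicative (ZMod 2), s * s = 1 := by decide

theorem C2comm : ∀ c : ZMod 4, (sr c : DihedralGroup 4)^2 * r 1 = r 1 * (sr c)^2 := by decide
theorem C3comm : ∀ b : ZMod 4, (r 1 : DihedralGroup 4)^2 * sr b = sr b * (r 1)^2 := by decide
theorem REL2 : ∀ c : ZMod 4, (sr c : DihedralGroup 4) * r 1 = (r 1)^3 * (sr c)^3 := by decide
theorem REL3 : ∀ b : ZMod 4, (r 1 : DihedralGroup 4) * sr b = (sr b)^3 * (r 1)^3 := by decide

theorem INJ : ∀ (b c : ZMod 4) (p q : M16),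
    ((r 1 : DihedralGroup 4)^p.1.val * (sr c)^p.2.val = (r 1)^q.1.val * (sr c)^q.2.val) →
    ((sr b : DihedralGroup 4)^p.1.val * (r 1)^p.2.val = (sr b)^q.1.val * (r 1)^q.2.val) →
      p = q := by decide

theorem S1 : ∀ (b c i j : ZMod 4), i + i = 0 → j + j = 0 →
    ∃ p : M16, (r 1 : DihedralGroup 4)^p.1.val * (sr c)^p.2.val = r i ∧
      (sr b : DihedralGroup 4)^p.1.val * (r 1)^p.2.val = r j := by decide

theorem S2 : ∀ (b c i j : ZMod 4), (i-1) + (i-1) = 0 → (b-j) + (b-j) = 0 →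
    ∃ p : M16, (r 1 : DihedralGroup 4)^p.1.val * (sr c)^p.2.val = r i ∧
      (sr b : DihedralGroup 4)^p.1.val * (r 1)^p.2.val = sr j := by decide

theorem S3 : ∀ (b c i j : ZMod 4), (c-i) + (c-i) = 0 → (j-1) + (j-1) = 0 →
    ∃ p : M16, (r 1 : DihedralGroup 4)^p.1.val * (sr c)^p.2.val = sr i ∧
      (sr b : DihedralGroup 4)^p.1.val * (r 1)^p.2.val = r j := by decide

theorem S4 : ∀ (b c i j : ZMod 4), ((c-i)-1) + ((c-i)-1) = 0 → (b-(j-1)) + (b-(j-1)) = 0 →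
    ∃ p : M16, (r 1 : DihedralGroup 4)^p.1.val * (sr c)^p.2.val = sr i ∧
      (sr b : DihedralGroup 4)^p.1.val * (r 1)^p.2.val = sr j := by decide

end SDP

set_option maxHeartbeats 2000000 in
open DihedralGroup SDP in
theorem statement_15 {n₁ n₂ n₃ : ℕ} (hp₁ : 0 < n₁) (hp₂ : 0 < n₂) (hp₃ : 0 < n₃)
    (Γ : Subgroup (Multiplicative (ZMod n₁) × DihedralGroup n₂ × DihedralGroup n₃))
    (hsd : IsSubdirect3 Γ) (h2inj : IsTwoInjective3 Γ) :
    (let P₁ : Prop := n₁ ≤ 2 ∧ 2 < n₂ ∧ 2 < n₃ ∧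
        IsRotateOrReflect2 (Γ.map (MonoidHom.snd (Multiplicative (ZMod n₁))
          (DihedralGroup n₂ × DihedralGroup n₃)))
     let P₂ : Prop := (n₁ = 4 ∧ n₂ = 4 ∧ n₃ = 4) ∧
        Nonempty (Γ ≃* ↥
          (doubleCFI ⊓ rotD4.prod (⊤ : Subgroup (DihedralGroup 4 × DihedralGroup 4))))
     let P₃ : Prop := (n₁ ≤ 2 ∧ n₂ ≤ 2 ∧ n₃ ≤ 2) ∧ ∀ g ∈ Γ, ∀ h ∈ Γ, g * h = h * g
     (P₁ ∨ P₂ ∨ P₃) ∧ (P₁ → ¬P₂ ∧ ¬P₃) ∧ (P₂ → ¬P₁ ∧ ¬P₃) ∧ (P₃ → ¬P₁ ∧ ¬P₂)) ∧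
    (∀ (n : ℕ), 2 < n → ∀ (G₂ G₃ : Type) [CommGroup G₂] [CommGroup G₃],
      ¬ ∃ Γ' : Subgroup (DihedralGroup n × G₂ × G₃),
          IsSubdirect3 Γ' ∧ IsTwoInjective3 Γ') := by
  constructor
  · obtain ⟨hs1, hs2, hs3⟩ := hsd
    obtain ⟨hi1, hi2, hi3⟩ := h2inj
    intro P₁ P₂ P₃
    have E23 : ∀ g ∈ Γ, g.2.1 = 1 → g.2.2 = 1 → g = 1 := fun g hg h2 h3 =>
      hi1 g hg 1 (one_mem Γ) h2 h3
    have E13 : ∀ g ∈ Γ, g.1 = 1 → g.2.2 = 1 → g = 1 := fun g hg h1 h3 =>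
      hi2 g hg 1 (one_mem Γ) h1 h3
    have E12 : ∀ g ∈ Γ, g.1 = 1 → g.2.1 = 1 → g = 1 := fun g hg h1 h2 =>
      hi3 g hg 1 (one_mem Γ) h1 h2
    have c1 : ∀ s t : Multiplicative (ZMod n₁), s * t * s⁻¹ * t⁻¹ = 1 := by
      intro s t; rw [mul_comm s t]; group
    haveI : NeZero n₁ := ⟨by omega⟩
    haveI : NeZero n₂ := ⟨by omega⟩
    haveI : NeZero n₃ := ⟨by omega⟩
    -- turn `∀ t, t * t = 1` into `n₁ ≤ 2`
    have n1le_of : (∀ t : Multiplicative (ZMod n₁), t * t = 1) → n₁ ≤ 2 := by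
      intro key
      have h11 : (1 : ZMod n₁) + 1 = 0 :=
        congrArg Multiplicative.toAdd (key (Multiplicative.ofAdd 1))
      have h2 : ((2 : ℕ) : ZMod n₁) = 0 := by push_cast; linear_combination h11
      have hdvd : n₁ ∣ 2 := (ZMod.natCast_eq_zero_iff 2 n₁).mp h2
      exact Nat.le_of_dvd (by norm_num) hdvd
    -- the main disjunction
    have main : P₁ ∨ P₂ ∨ P₃ := by
      by_cases h2big : 2 < n₂
      · by_cases h3big : 2 < n₃
        · by_cases hmix : ∃ g ∈ Γ,
              ((∃ i, g.2.1 = r i) ∧ (∃ j, g.2.2 = sr j)) ∨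
              ((∃ i, g.2.1 = sr i) ∧ (∃ j, g.2.2 = r j))
          · -- MIXED CASE
            have hBoth : (∃ u ∈ Γ, ∃ a b₀, u.2.1 = r a ∧ u.2.2 = sr b₀) ∧
                (∃ v ∈ Γ, ∃ c₀ d, v.2.1 = sr c₀ ∧ v.2.2 = r d) := by
              obtain ⟨g, hg, hcase⟩ := hmix
              rcases hcase with ⟨⟨i, hi⟩, ⟨j, hj⟩⟩ | ⟨⟨i, hi⟩, ⟨j, hj⟩⟩
              · refine ⟨⟨g, hg, i, j, hi, hj⟩, ?_⟩
                obtain ⟨e, he, he1⟩ := hs2 (sr 0)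
                rcases rotrefl e.2.2 with ⟨q, hq⟩ | ⟨q, hq⟩
                · exact ⟨e, he, 0, q, he1, hq⟩
                · refine ⟨e * g, mul_mem he hg, 0 + i, j - q, ?_, ?_⟩
                  · show e.2.1 * g.2.1 = _
                    rw [he1, hi, sr_mul_r]
                  · show e.2.2 * g.2.2 = _
                    rw [hq, hj, sr_mul_sr]
              · refine ⟨?_, ⟨g, hg, i, j, hi, hj⟩⟩
                obtain ⟨e, he, he1⟩ := hs3 (sr 0)
                rcases rotrefl e.2.1 with ⟨q, hq⟩ | ⟨q, hq⟩
                · exact ⟨e, he, q, 0, hq, he1⟩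
                · refine ⟨e * g, mul_mem he hg, i - q, 0 + j, ?_, ?_⟩
                  · show e.2.1 * g.2.1 = _
                    rw [hq, hi, sr_mul_sr]
                  · show e.2.2 * g.2.2 = _
                    rw [he1, hj, sr_mul_r]
            obtain ⟨⟨u₀, hu₀, a, b₀, hu01, hu02⟩, ⟨v₀, hv₀, c₀, d, hv01, hv02⟩⟩ := hBoth
            have L1 : ∀ g ∈ Γ, ∀ i j, g.2.1 = r i → g.2.2 = r j →
                i + i = 0 ∧ j + j = 0 := by
              intro g hg i j h2 h3
              constructor
              · have hk : v₀ * g * v₀⁻¹ * g⁻¹ ∈ Γ :=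
                  mul_mem (mul_mem (mul_mem hv₀ hg) (inv_mem hv₀)) (inv_mem hg)
                have e1 : (v₀ * g * v₀⁻¹ * g⁻¹).1 = 1 := c1 v₀.1 g.1
                have e3 : (v₀ * g * v₀⁻¹ * g⁻¹).2.2 = 1 := by
                  show v₀.2.2 * g.2.2 * v₀.2.2⁻¹ * g.2.2⁻¹ = 1
                  rw [hv02, h3, SDP.inv_r, SDP.inv_r, r_mul_r, r_mul_r, r_mul_r, one_def]
                  congr 1; ring
                have hone := E13 _ hk e1 e3
                have e2 := congrArg (fun z : Multiplicative (ZMod n₁) ×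
                  DihedralGroup n₂ × DihedralGroup n₃ => z.2.1) hone
                have hL : (v₀ * g * v₀⁻¹ * g⁻¹).2.1 = r (c₀ - (c₀ + i) + -i) := by
                  show v₀.2.1 * g.2.1 * v₀.2.1⁻¹ * g.2.1⁻¹ = _
                  rw [hv01, h2, SDP.inv_sr, SDP.inv_r, sr_mul_r, sr_mul_sr, r_mul_r]
                rw [hL, show (1 : Multiplicative (ZMod n₁) × DihedralGroup n₂ ×
                  DihedralGroup n₃).2.1 = r 0 from rfl] at e2
                have h' := r_inj e2
                linear_combination -h'
              · have hk : u₀ * g * u₀⁻¹ * g⁻¹ ∈ Γ :=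
                  mul_mem (mul_mem (mul_mem hu₀ hg) (inv_mem hu₀)) (inv_mem hg)
                have e1 : (u₀ * g * u₀⁻¹ * g⁻¹).1 = 1 := c1 u₀.1 g.1
                have e2 : (u₀ * g * u₀⁻¹ * g⁻¹).2.1 = 1 := by
                  show u₀.2.1 * g.2.1 * u₀.2.1⁻¹ * g.2.1⁻¹ = 1
                  rw [hu01, h2, SDP.inv_r, SDP.inv_r, r_mul_r, r_mul_r, r_mul_r, one_def]
                  congr 1; ring
                have hone := E12 _ hk e1 e2
                have e3 := congrArg (fun z : Multiplicative (ZMod n₁) ×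
                  DihedralGroup n₂ × DihedralGroup n₃ => z.2.2) hone
                have hL : (u₀ * g * u₀⁻¹ * g⁻¹).2.2 = r (b₀ - (b₀ + j) + -j) := by
                  show u₀.2.2 * g.2.2 * u₀.2.2⁻¹ * g.2.2⁻¹ = _
                  rw [hu02, h3, SDP.inv_sr, SDP.inv_r, sr_mul_r, sr_mul_sr, r_mul_r]
                rw [hL, show (1 : Multiplicative (ZMod n₁) × DihedralGroup n₂ ×
                  DihedralGroup n₃).2.2 = r 0 from rfl] at e3
                have h' := r_inj e3
                linear_combination -h'
            have key2 : ∀ i : ZMod n₂, i + i = 0 ∨ (i - a) + (i - a) = 0 := by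
              intro i
              obtain ⟨g, hg, hg1⟩ := hs2 (r i)
              rcases rotrefl g.2.2 with ⟨j, hj⟩ | ⟨j, hj⟩
              · exact Or.inl (L1 g hg i j hg1 hj).1
              · right
                have hm : g * u₀⁻¹ ∈ Γ := mul_mem hg (inv_mem hu₀)
                have h2 : (g * u₀⁻¹).2.1 = r (i + -a) := by
                  show g.2.1 * u₀.2.1⁻¹ = _
                  rw [hg1, hu01, SDP.inv_r, r_mul_r]
                have h3 : (g * u₀⁻¹).2.2 = r (b₀ - j) := by
                  show g.2.2 * u₀.2.2⁻¹ = _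
                  rw [hj, hu02, SDP.inv_sr, sr_mul_sr]
                have hx := (L1 _ hm _ _ h2 h3).1
                linear_combination hx
            have ha1 : (1 - a) + (1 - a) = 0 := by
              rcases key2 1 with h | h
              · exfalso
                have h20 : ((2:ℕ) : ZMod n₂) = 0 := by push_cast; linear_combination h
                have hdvd : n₂ ∣ 2 := (ZMod.natCast_eq_zero_iff 2 n₂).mp h20
                have := Nat.le_of_dvd (by norm_num) hdvd
                omega
              · linear_combination h
            have ha2 : (-1 - a) + (-1 - a) = 0 := by
              rcases key2 (-1) with h | h
              · exfalso
                have h20 : ((2:ℕ) : ZMod n₂) = 0 := by push_cast; linear_combination -h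
                have hdvd : n₂ ∣ 2 := (ZMod.natCast_eq_zero_iff 2 n₂).mp h20
                have := Nat.le_of_dvd (by norm_num) hdvd
                omega
              · linear_combination h
            have hn2 : n₂ = 4 := by
              have h40 : ((4:ℕ) : ZMod n₂) = 0 := by push_cast; linear_combination ha1 - ha2
              have hdvd : n₂ ∣ 4 := (ZMod.natCast_eq_zero_iff 4 n₂).mp h40
              have := Nat.le_of_dvd (by norm_num) hdvd
              interval_cases n₂
              · exact absurd hdvd (by norm_num)
              · rfl
            have key3 : ∀ j : ZMod n₃, j + j = 0 ∨ (j - d) + (j - d) = 0 := by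
              intro j
              obtain ⟨g, hg, hg1⟩ := hs3 (r j)
              rcases rotrefl g.2.1 with ⟨i, hi⟩ | ⟨i, hi⟩
              · exact Or.inl (L1 g hg i j hi hg1).2
              · right
                have hm : g * v₀⁻¹ ∈ Γ := mul_mem hg (inv_mem hv₀)
                have h2 : (g * v₀⁻¹).2.1 = r (c₀ - i) := by
                  show g.2.1 * v₀.2.1⁻¹ = _
                  rw [hi, hv01, SDP.inv_sr, sr_mul_sr]
                have h3 : (g * v₀⁻¹).2.2 = r (j + -d) := by
                  show g.2.2 * v₀.2.2⁻¹ = _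
                  rw [hg1, hv02, SDP.inv_r, r_mul_r]
                have hx := (L1 _ hm _ _ h2 h3).2
                linear_combination hx
            have hd1 : (1 - d) + (1 - d) = 0 := by
              rcases key3 1 with h | h
              · exfalso
                have h20 : ((2:ℕ) : ZMod n₃) = 0 := by push_cast; linear_combination h
                have hdvd : n₃ ∣ 2 := (ZMod.natCast_eq_zero_iff 2 n₃).mp h20
                have := Nat.le_of_dvd (by norm_num) hdvd
                omega
              · linear_combination h
            have hd2 : (-1 - d) + (-1 - d) = 0 := by
              rcases key3 (-1) with h | h
              · exfalso
                have h20 : ((2:ℕ) : ZMod n₃) = 0 := by push_cast; linear_combination -h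
                have hdvd : n₃ ∣ 2 := (ZMod.natCast_eq_zero_iff 2 n₃).mp h20
                have := Nat.le_of_dvd (by norm_num) hdvd
                omega
              · linear_combination h
            have hn3 : n₃ = 4 := by
              have h40 : ((4:ℕ) : ZMod n₃) = 0 := by push_cast; linear_combination hd1 - hd2
              have hdvd : n₃ ∣ 4 := (ZMod.natCast_eq_zero_iff 4 n₃).mp h40
              have := Nat.le_of_dvd (by norm_num) hdvd
              interval_cases n₃
              · exact absurd hdvd (by norm_num)
              · rfl
            subst hn2
            subst hn3
            have haodd : a = 1 ∨ a = 3 := ODD a ha1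
            have hdodd : d = 1 ∨ d = 3 := ODD d hd1
            obtain ⟨u, hu, bu, hu1', hu2'⟩ : ∃ u ∈ Γ, ∃ bu, u.2.1 = r 1 ∧ u.2.2 = sr bu := by
              rcases haodd with h | h
              · exact ⟨u₀, hu₀, b₀, by rw [hu01, h], hu02⟩
              · refine ⟨u₀⁻¹, inv_mem hu₀, b₀, ?_, ?_⟩
                · show u₀.2.1⁻¹ = r 1
                  rw [hu01, h, SDP.inv_r]
                  decide
                · show u₀.2.2⁻¹ = sr b₀
                  rw [hu02, SDP.inv_sr]
            obtain ⟨v, hv, cv, hv1', hv2'⟩ : ∃ v ∈ Γ, ∃ cv, v.2.1 = sr cv ∧ v.2.2 = r 1 := by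
              rcases hdodd with h | h
              · exact ⟨v₀, hv₀, c₀, hv01, by rw [hv02, h]⟩
              · refine ⟨v₀⁻¹, inv_mem hv₀, c₀, ?_, ?_⟩
                · show v₀.2.1⁻¹ = sr c₀
                  rw [hv01, SDP.inv_sr]
                · show v₀.2.2⁻¹ = r 1
                  rw [hv02, h, SDP.inv_r]
                  decide
            have Grs : ∀ g ∈ Γ, ∀ i j, g.2.1 = r i → g.2.2 = sr j →
                (i - 1) + (i - 1) = 0 ∧ (bu - j) + (bu - j) = 0 := by
              intro g hg i j h2 h3
              have hm : g * u⁻¹ ∈ Γ := mul_mem hg (inv_mem hu)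
              have e2 : (g * u⁻¹).2.1 = r (i + -1) := by
                show g.2.1 * u.2.1⁻¹ = _
                rw [h2, hu1', SDP.inv_r, r_mul_r]
              have e3 : (g * u⁻¹).2.2 = r (bu - j) := by
                show g.2.2 * u.2.2⁻¹ = _
                rw [h3, hu2', SDP.inv_sr, sr_mul_sr]
              obtain ⟨x1, x2⟩ := L1 _ hm _ _ e2 e3
              exact ⟨by linear_combination x1, x2⟩
            have Gsr : ∀ g ∈ Γ, ∀ i j, g.2.1 = sr i → g.2.2 = r j →
                (cv - i) + (cv - i) = 0 ∧ (j - 1) + (j - 1) = 0 := by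
              intro g hg i j h2 h3
              have hm : g * v⁻¹ ∈ Γ := mul_mem hg (inv_mem hv)
              have e2 : (g * v⁻¹).2.1 = r (cv - i) := by
                show g.2.1 * v.2.1⁻¹ = _
                rw [h2, hv1', SDP.inv_sr, sr_mul_sr]
              have e3 : (g * v⁻¹).2.2 = r (j + -1) := by
                show g.2.2 * v.2.2⁻¹ = _
                rw [h3, hv2', SDP.inv_r, r_mul_r]
              obtain ⟨x1, x2⟩ := L1 _ hm _ _ e2 e3
              exact ⟨x1, by linear_combination x2⟩
            have Gss : ∀ g ∈ Γ, ∀ i j, g.2.1 = sr i → g.2.2 = sr j →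
                ((cv - i) - 1) + ((cv - i) - 1) = 0 ∧
                  (bu - (j - 1)) + (bu - (j - 1)) = 0 := by
              intro g hg i j h2 h3
              have hm : g * v⁻¹ ∈ Γ := mul_mem hg (inv_mem hv)
              have e2 : (g * v⁻¹).2.1 = r (cv - i) := by
                show g.2.1 * v.2.1⁻¹ = _
                rw [h2, hv1', SDP.inv_sr, sr_mul_sr]
              have e3 : (g * v⁻¹).2.2 = sr (j + -1) := by
                show g.2.2 * v.2.2⁻¹ = _
                rw [h3, hv2', SDP.inv_r, sr_mul_r]
              obtain ⟨x1, x2⟩ := Grs _ hm _ _ e2 e3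
              exact ⟨x1, by linear_combination x2⟩
            have hg4 : ∀ g ∈ Γ, g ^ 4 = 1 := by
              intro g hg
              refine E23 _ (pow_mem hg 4) ?_ ?_
              · show ((g ^ 4).2).1 = 1
                rw [Prod.pow_snd, Prod.pow_fst]
                exact dih4 g.2.1
              · show ((g ^ 4).2).2 = 1
                rw [Prod.pow_snd, Prod.pow_snd]
                exact dih4 g.2.2
            have husq : ¬(u.1 * u.1 = 1) := by
              intro hsq
              have e1 : (u * u).1 = 1 := hsq
              have e3 : (u * u).2.2 = 1 := by
                show u.2.2 * u.2.2 = 1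
                rw [hu2', sr_mul_sr, one_def]
                congr 1; ring
              have hone := E13 _ (mul_mem hu hu) e1 e3
              have e2 := congrArg (fun z : Multiplicative (ZMod n₁) ×
                DihedralGroup 4 × DihedralGroup 4 => z.2.1) hone
              have hL : (u * u).2.1 = r 2 := by
                show u.2.1 * u.2.1 = r 2
                rw [hu1', r_mul_r]
                decide
              rw [hL, show (1 : Multiplicative (ZMod n₁) × DihedralGroup 4 ×
                DihedralGroup 4).2.1 = r 0 from rfl] at e2
              have h' := r_inj e2
              revert h'
              decide
            have hvsq : ¬(v.1 * v.1 = 1) := by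
              intro hsq
              have e1 : (v * v).1 = 1 := hsq
              have e2 : (v * v).2.1 = 1 := by
                show v.2.1 * v.2.1 = 1
                rw [hv1', sr_mul_sr, one_def]
                congr 1; ring
              have hone := E12 _ (mul_mem hv hv) e1 e2
              have e3 := congrArg (fun z : Multiplicative (ZMod n₁) ×
                DihedralGroup 4 × DihedralGroup 4 => z.2.2) hone
              have hL : (v * v).2.2 = r 2 := by
                show v.2.2 * v.2.2 = r 2
                rw [hv2', r_mul_r]
                decide
              rw [hL, show (1 : Multiplicative (ZMod n₁) × DihedralGroup 4 ×
                DihedralGroup 4).2.2 = r 0 from rfl] at e3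
              have h' := r_inj e3
              revert h'
              decide
            have hn1 : n₁ = 4 := by
              have ht4 : ∀ t : Multiplicative (ZMod n₁), t ^ 4 = 1 := by
                intro t
                obtain ⟨g, hg, hg1⟩ := hs1 t
                have h := congrArg Prod.fst (hg4 g hg)
                rw [Prod.pow_fst, hg1] at h
                exact h
              have h14 : (1 : ZMod n₁) + 1 + 1 + 1 = 0 := by
                have h := congrArg Multiplicative.toAdd (ht4 (Multiplicative.ofAdd 1))
                simpa [pow_succ] using h
              have h40 : ((4:ℕ) : ZMod n₁) = 0 := by push_cast; linear_combination h14
              have hdvd : n₁ ∣ 4 := (ZMod.natCast_eq_zero_iff 4 n₁).mp h40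
              have hle := Nat.le_of_dvd (by norm_num) hdvd
              interval_cases n₁
              · exact absurd (M1sq u.1) husq
              · exact absurd (M2sq u.1) husq
              · exact absurd hdvd (by norm_num)
              · rfl
            subst hn1
            have hU4 : (⟨u, hu⟩ : ↥Γ) ^ 4 = 1 := by
              apply Subtype.ext
              rw [SubmonoidClass.coe_pow]
              exact hg4 u hu
            have hV4 : (⟨v, hv⟩ : ↥Γ) ^ 4 = 1 := by
              apply Subtype.ext
              rw [SubmonoidClass.coe_pow]
              exact hg4 v hv
            have hcomm : Commute ((⟨v, hv⟩ : ↥Γ) ^ 2) ⟨u, hu⟩ := by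
              show (⟨v, hv⟩ : ↥Γ) ^ 2 * ⟨u, hu⟩ = ⟨u, hu⟩ * (⟨v, hv⟩ : ↥Γ) ^ 2
              apply Subtype.ext
              rw [Subgroup.coe_mul, Subgroup.coe_mul, SubmonoidClass.coe_pow]
              refine Prod.ext ?_ (Prod.ext ?_ ?_)
              · simp only [Prod.fst_mul, Prod.pow_fst]
                exact mul_comm _ _
              · simp only [Prod.snd_mul, Prod.fst_mul, Prod.pow_snd, Prod.pow_fst]
                rw [hv1', hu1']
                exact C2comm cv
              · simp only [Prod.snd_mul, Prod.pow_snd]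
                rw [hv2', hu2']
                exact C3comm bu
            have hrel : (⟨v, hv⟩ : ↥Γ) * ⟨u, hu⟩ =
                (⟨u, hu⟩ : ↥Γ) ^ 3 * (⟨v, hv⟩ : ↥Γ) ^ 3 := by
              apply Subtype.ext
              rw [Subgroup.coe_mul, Subgroup.coe_mul, SubmonoidClass.coe_pow,
                SubmonoidClass.coe_pow]
              refine Prod.ext ?_ (Prod.ext ?_ ?_)
              · simp only [Prod.fst_mul, Prod.pow_fst]
                exact TWO4 u.1 v.1 husq hvsq
              · simp only [Prod.snd_mul, Prod.fst_mul, Prod.pow_snd, Prod.pow_fst]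
                rw [hv1', hu1']
                exact REL2 cv
              · simp only [Prod.snd_mul, Prod.pow_snd]
                rw [hv2', hu2']
                exact REL3 bu
            have hvalv : ∀ p : M16, (genHom (⟨u, hu⟩ : ↥Γ) (⟨v, hv⟩ : ↥Γ) hU4 hV4 hcomm hrel p).val =
                u ^ p.1.val * v ^ p.2.val := by
              intro p
              show ((⟨u, hu⟩ : ↥Γ) ^ p.1.val * (⟨v, hv⟩ : ↥Γ) ^ p.2.val).val = _
              rw [Subgroup.coe_mul, SubmonoidClass.coe_pow, SubmonoidClass.coe_pow]
            have hval21 : ∀ p : M16, (genHom (⟨u, hu⟩ : ↥Γ) (⟨v, hv⟩ : ↥Γ) hU4 hV4 hcomm hrel p).val.2.1 =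
                (r 1) ^ p.1.val * (sr cv) ^ p.2.val := by
              intro p
              rw [hvalv p]
              simp only [Prod.snd_mul, Prod.fst_mul, Prod.pow_snd, Prod.pow_fst]
              rw [hu1', hv1']
            have hval22 : ∀ p : M16, (genHom (⟨u, hu⟩ : ↥Γ) (⟨v, hv⟩ : ↥Γ) hU4 hV4 hcomm hrel p).val.2.2 =
                (sr bu) ^ p.1.val * (r 1) ^ p.2.val := by
              intro p
              rw [hvalv p]
              simp only [Prod.snd_mul, Prod.pow_snd]
              rw [hu2', hv2']
            have hinj : Function.Injective (genHom (⟨u, hu⟩ : ↥Γ) (⟨v, hv⟩ : ↥Γ) hU4 hV4 hcomm hrel) := by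
              intro p q h
              have h2 : (r 1 : DihedralGroup 4) ^ p.1.val * (sr cv) ^ p.2.val =
                  (r 1) ^ q.1.val * (sr cv) ^ q.2.val := by
                rw [← hval21 p, ← hval21 q, h]
              have h3 : (sr bu : DihedralGroup 4) ^ p.1.val * (r 1) ^ p.2.val =
                  (sr bu) ^ q.1.val * (r 1) ^ q.2.val := by
                rw [← hval22 p, ← hval22 q, h]
              exact INJ bu cv p q h2 h3
            have hsurj : Function.Surjective (genHom (⟨u, hu⟩ : ↥Γ) (⟨v, hv⟩ : ↥Γ) hU4 hV4 hcomm hrel) := by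
              rintro ⟨g, hg⟩
              have hex : ∃ p : M16, (r 1 : DihedralGroup 4) ^ p.1.val * (sr cv) ^ p.2.val
                  = g.2.1 ∧ (sr bu : DihedralGroup 4) ^ p.1.val * (r 1) ^ p.2.val = g.2.2 := by
                rcases rotrefl g.2.1 with ⟨i, hi⟩ | ⟨i, hi⟩ <;>
                  rcases rotrefl g.2.2 with ⟨j, hj⟩ | ⟨j, hj⟩
                · obtain ⟨x1, x2⟩ := L1 g hg i j hi hj
                  rw [hi, hj]
                  exact S1 bu cv i j x1 x2
                · obtain ⟨x1, x2⟩ := Grs g hg i j hi hj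
                  rw [hi, hj]
                  exact S2 bu cv i j x1 x2
                · obtain ⟨x1, x2⟩ := Gsr g hg i j hi hj
                  rw [hi, hj]
                  exact S3 bu cv i j x1 x2
                · obtain ⟨x1, x2⟩ := Gss g hg i j hi hj
                  rw [hi, hj]
                  exact S4 bu cv i j x1 x2
              obtain ⟨p, h2, h3⟩ := hex
              refine ⟨p, ?_⟩
              apply Subtype.ext
              refine hi1 _ (genHom (⟨u, hu⟩ : ↥Γ) (⟨v, hv⟩ : ↥Γ) hU4 hV4 hcomm hrel p).2 g hg ?_ ?_
              · rw [hval21 p]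
                exact h2
              · rw [hval22 p]
                exact h3
            exact Or.inr (Or.inl ⟨⟨rfl, rfl, rfl⟩,
              ⟨(MulEquiv.ofBijective _ ⟨hinj, hsurj⟩).symm.trans eT⟩⟩)
          · -- rotate-or-reflect case
            have hnm : ∀ g ∈ Γ, ¬(((∃ i, g.2.1 = r i) ∧ (∃ j, g.2.2 = sr j)) ∨
                ((∃ i, g.2.1 = sr i) ∧ (∃ j, g.2.2 = r j))) :=
              fun g hg hAB => hmix ⟨g, hg, hAB⟩
            refine Or.inl ⟨?_, h2big, h3big, ?_⟩
            · -- n₁ ≤ 2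
              apply n1le_of
              intro t
              obtain ⟨g, hg, hg1⟩ := hs1 t
              rcases rotrefl g.2.1 with ⟨i, hi⟩ | ⟨i, hi⟩ <;>
                rcases rotrefl g.2.2 with ⟨j, hj⟩ | ⟨j, hj⟩
              · -- rot-rot; find a refl-refl element γ
                obtain ⟨γ, hγ, hγ1⟩ := hs2 (sr 0)
                rcases rotrefl γ.2.2 with ⟨q, hq⟩ | ⟨q, hq⟩
                · exact absurd (Or.inr ⟨⟨0, hγ1⟩, ⟨q, hq⟩⟩) (hnm γ hγ)
                · have hw : g * (γ * g * γ⁻¹) ∈ Γ :=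
                    mul_mem hg (mul_mem (mul_mem hγ hg) (inv_mem hγ))
                  have e2 : (g * (γ * g * γ⁻¹)).2.1 = 1 := by
                    show g.2.1 * (γ.2.1 * g.2.1 * γ.2.1⁻¹) = 1
                    rw [hi, hγ1, SDP.inv_sr, sr_mul_r, sr_mul_sr, r_mul_r, one_def]
                    congr 1; ring
                  have e3 : (g * (γ * g * γ⁻¹)).2.2 = 1 := by
                    show g.2.2 * (γ.2.2 * g.2.2 * γ.2.2⁻¹) = 1
                    rw [hj, hq, SDP.inv_sr, sr_mul_r, sr_mul_sr, r_mul_r, one_def]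
                    congr 1; ring
                  have hone := E23 _ hw e2 e3
                  have e1 := congrArg Prod.fst hone
                  have hL : (g * (γ * g * γ⁻¹)).1 = t * t := by
                    show g.1 * (γ.1 * g.1 * γ.1⁻¹) = t * t
                    rw [mul_comm γ.1 g.1, mul_assoc g.1 γ.1, mul_inv_cancel, mul_one, hg1]
                  rw [hL] at e1
                  exact e1
              · exact absurd (Or.inl ⟨⟨i, hi⟩, ⟨j, hj⟩⟩) (hnm g hg)
              · exact absurd (Or.inr ⟨⟨i, hi⟩, ⟨j, hj⟩⟩) (hnm g hg)
              · -- refl-refl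
                have hw : g * g ∈ Γ := mul_mem hg hg
                have e2 : (g * g).2.1 = 1 := by
                  show g.2.1 * g.2.1 = 1
                  rw [hi, sr_mul_sr, one_def]; congr 1; ring
                have e3 : (g * g).2.2 = 1 := by
                  show g.2.2 * g.2.2 = 1
                  rw [hj, sr_mul_sr, one_def]; congr 1; ring
                have hone := E23 _ hw e2 e3
                have e1 := congrArg Prod.fst hone
                rw [← hg1]; exact e1
            · -- rotate or reflect
              rintro x ⟨g, hg, rfl⟩
              rcases rotrefl g.2.1 with ⟨i, hi⟩ | ⟨i, hi⟩ <;>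
                rcases rotrefl g.2.2 with ⟨j, hj⟩ | ⟨j, hj⟩
              · exact Or.inl ⟨⟨i, hi⟩, ⟨j, hj⟩⟩
              · exact absurd (Or.inl ⟨⟨i, hi⟩, ⟨j, hj⟩⟩) (hnm g hg)
              · exact absurd (Or.inr ⟨⟨i, hi⟩, ⟨j, hj⟩⟩) (hnm g hg)
              · exact Or.inr ⟨⟨i, hi⟩, ⟨j, hj⟩⟩
        · -- n₂ > 2, n₃ ≤ 2 : contradiction
          exfalso
          obtain ⟨g, hg, hg1⟩ := hs2 (r 1)
          obtain ⟨h, hh, hh1⟩ := hs2 (sr 0)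
          have hk : g * h * g⁻¹ * h⁻¹ ∈ Γ :=
            mul_mem (mul_mem (mul_mem hg hh) (inv_mem hg)) (inv_mem hh)
          have e1 : (g * h * g⁻¹ * h⁻¹).1 = 1 := c1 g.1 h.1
          have e3 : (g * h * g⁻¹ * h⁻¹).2.2 = 1 := by
            show g.2.2 * h.2.2 * g.2.2⁻¹ * h.2.2⁻¹ = 1
            rw [dih_comm hp₃ (by omega) g.2.2 h.2.2]; group
          have hone := E13 _ hk e1 e3
          have e2 := congrArg (fun z : Multiplicative (ZMod n₁) ×
            DihedralGroup n₂ × DihedralGroup n₃ => z.2.1) hone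
          simp only [Prod.snd_mul, Prod.fst_mul, Prod.snd_inv, Prod.fst_inv] at e2
          rw [hg1, hh1, SDP.inv_r, SDP.inv_sr, r_mul_sr, sr_mul_r, sr_mul_sr] at e2
          have he : (0 : ZMod n₂) - (0 - 1 + -1) = 2 := by ring
          rw [he] at e2
          have h20 : ((2 : ℕ) : ZMod n₂) = 0 := by
            rw [show (1 : Multiplicative (ZMod n₁) × DihedralGroup n₂ ×
              DihedralGroup n₃).2.1 = r 0 from rfl] at e2
            have h' := r_inj e2
            push_cast; linear_combination h'
          have hdvd : n₂ ∣ 2 := (ZMod.natCast_eq_zero_iff 2 n₂).mp h20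
          have := Nat.le_of_dvd (by norm_num) hdvd
          omega
      · by_cases h3big : 2 < n₃
        · -- n₃ > 2, n₂ ≤ 2 : contradiction
          exfalso
          obtain ⟨g, hg, hg1⟩ := hs3 (r 1)
          obtain ⟨h, hh, hh1⟩ := hs3 (sr 0)
          have hk : g * h * g⁻¹ * h⁻¹ ∈ Γ :=
            mul_mem (mul_mem (mul_mem hg hh) (inv_mem hg)) (inv_mem hh)
          have e1 : (g * h * g⁻¹ * h⁻¹).1 = 1 := c1 g.1 h.1
          have e2 : (g * h * g⁻¹ * h⁻¹).2.1 = 1 := by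
            show g.2.1 * h.2.1 * g.2.1⁻¹ * h.2.1⁻¹ = 1
            rw [dih_comm hp₂ (by omega) g.2.1 h.2.1]; group
          have hone := E12 _ hk e1 e2
          have e3 := congrArg (fun z : Multiplicative (ZMod n₁) ×
            DihedralGroup n₂ × DihedralGroup n₃ => z.2.2) hone
          simp only [Prod.snd_mul, Prod.snd_inv] at e3
          rw [hg1, hh1, SDP.inv_r, SDP.inv_sr, r_mul_sr, sr_mul_r, sr_mul_sr] at e3
          have he : (0 : ZMod n₃) - (0 - 1 + -1) = 2 := by ring
          rw [he] at e3
          have h20 : ((2 : ℕ) : ZMod n₃) = 0 := by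
            rw [show (1 : Multiplicative (ZMod n₁) × DihedralGroup n₂ ×
              DihedralGroup n₃).2.2 = r 0 from rfl] at e3
            have h' := r_inj e3
            push_cast; linear_combination h'
          have hdvd : n₃ ∣ 2 := (ZMod.natCast_eq_zero_iff 2 n₃).mp h20
          have := Nat.le_of_dvd (by norm_num) hdvd
          omega
        · -- n₂ ≤ 2, n₃ ≤ 2 : P₃
          refine Or.inr (Or.inr ⟨⟨?_, by omega, by omega⟩, ?_⟩)
          · apply n1le_of
            intro t
            obtain ⟨g, hg, hg1⟩ := hs1 t
            have hw : g * g ∈ Γ := mul_mem hg hg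
            have e2 : (g * g).2.1 = 1 := dih_sq hp₂ (by omega) g.2.1
            have e3 : (g * g).2.2 = 1 := dih_sq hp₃ (by omega) g.2.2
            have hone := E23 _ hw e2 e3
            have e1 := congrArg Prod.fst hone
            rw [← hg1]; exact e1
          · intro g hg h hh
            refine Prod.ext (mul_comm g.1 h.1) (Prod.ext ?_ ?_)
            · exact dih_comm hp₂ (by omega) g.2.1 h.2.1
            · exact dih_comm hp₃ (by omega) g.2.2 h.2.2
    refine ⟨main, ?_, ?_, ?_⟩
    · intro h
      refine ⟨fun h2 => ?_, fun h3 => ?_⟩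
      · have := h.1; have := h2.1.1; omega
      · have := h.2.1; have := h3.1.2.1; omega
    · intro h
      refine ⟨fun h1 => ?_, fun h3 => ?_⟩
      · have := h.1.1; have := h1.1; omega
      · have := h.1.1; have := h3.1.1; omega
    · intro h
      refine ⟨fun h1 => ?_, fun h2 => ?_⟩
      · have := h.1.2.1; have := h1.2.1; omega
      · have := h.1.1; have := h2.1.1; omega
  · -- part 2
    rintro n hn G₂ G₃ _ _ ⟨Γ', ⟨hs1', hs2', hs3'⟩, hi1', hi2', hi3'⟩
    obtain ⟨g, hg, hg1⟩ := hs1' (r 1)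
    obtain ⟨h, hh, hh1⟩ := hs1' (sr 0)
    have hk : g * h * g⁻¹ * h⁻¹ ∈ Γ' :=
      mul_mem (mul_mem (mul_mem hg hh) (inv_mem hg)) (inv_mem hh)
    have e2 : (g * h * g⁻¹ * h⁻¹).2.1 = 1 := by
      show g.2.1 * h.2.1 * g.2.1⁻¹ * h.2.1⁻¹ = 1
      rw [mul_comm g.2.1 h.2.1]; group
    have e3 : (g * h * g⁻¹ * h⁻¹).2.2 = 1 := by
      show g.2.2 * h.2.2 * g.2.2⁻¹ * h.2.2⁻¹ = 1
      rw [mul_comm g.2.2 h.2.2]; group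
    have hone := hi1' _ hk 1 (one_mem Γ') e2 e3
    have e1 := congrArg (fun z : DihedralGroup n × G₂ × G₃ => z.1) hone
    simp only [Prod.fst_mul, Prod.fst_inv] at e1
    rw [hg1, hh1, SDP.inv_r, SDP.inv_sr, r_mul_sr, sr_mul_r, sr_mul_sr] at e1
    have he : (0 : ZMod n) - (0 - 1 + -1) = 2 := by ring
    rw [he] at e1
    have h20 : ((2 : ℕ) : ZMod n) = 0 := by
      rw [show (1 : DihedralGroup n × G₂ × G₃).1 = r 0 from rfl] at e1
      have h' := r_inj e1
      push_cast; linear_combination h'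
    haveI : NeZero n := ⟨by omega⟩
    have hdvd : n ∣ 2 := (ZMod.natCast_eq_zero_iff 2 n).mp h20
    have := Nat.le_of_dvd (by norm_num) hdvd
    omega
end
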